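/- Assume x satisfies Hypotheses (X1) and (X2), let κ∈(0,γ] with 3κ+γ>1, and let z∈Q_{κ,a,b}(ℝ^l) be a weakly controlled path with data (ζ¹,ζ²,r,ρ). Let φ∈C_b³(ℝ^l;ℝ) and set ẑ_t=φ(z_t), â=φ(a), b̂^j=∂_iφ(a)b^{ij}. Then ẑ is a weakly controlled path in Q_{κ,â,b̂}(ℝ): it admits the decomposition (δẑ)_{st}=(ζ̂¹_s)^j(δx^j)_{st}+(ζ̂²_s)^{jk}(x²_{st})^{kj}+r̂_{st} and (δ(ζ̂¹)^j)_{st}=(ζ̂²_s)^{jk}(δx^k)_{st}+ρ̂^j_{st}, with coefficients (ζ̂¹)^j=∂_iφ(z)(ζ¹)^{ij} and (ζ̂²)^{jk}=∂_iφ(z)(ζ²)^{ijk}+∂_{i₁i₂}φ(z)(ζ¹)^{i₁j}(ζ¹)^{i₂k}, and remainders r̂∈C_2^{3κ}(ℝ), ρ̂∈C_2^{2κ}(ℝ^{1×d}). Moreover there exists a constant c depending only on φ, x (through the Hölder norms of x, x², x³) and T such that N[ẑ;Q_{κ,â,b̂}(ℝ)] ≤ c(1+N[z;Q_{κ,a,b}(ℝ^l)]³).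 -/

import Mathlib

/-!
STATEMENT 4: Composition of a weakly controlled path with a `C_b³` map `φ` is again
weakly controlled, with explicit coefficients, and the corresponding norm is cubically
bounded: `N[ẑ;Q] ≤ c (1 + N[z;Q]³)` for a constant depending only on `φ, x, T`.
-/

open Set Filter MeasureTheory Topology

noncomputable section

variable {V : Type*} [NormedAddCommGroup V]

/-- Hölder-type bound for a 1-increment (2-parameter function) on `[a,b]`. -/
def HBound2 (a b μ C : ℝ) (f : ℝ → ℝ → V) : Prop :=
  ∀ s ∈ Icc a b, ∀ t ∈ Icc a b, ‖f s t‖ ≤ C * |t - s| ^ μ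

/-- `f ∈ C₂^μ([a,b];V)`. -/
def Mem2 (a b μ : ℝ) (f : ℝ → ℝ → V) : Prop := ∃ C, 0 ≤ C ∧ HBound2 a b μ C f

/-- The Hölder norm `‖f‖_μ` of a 1-increment on `[a,b]`. -/
def HNorm2 (a b μ : ℝ) (f : ℝ → ℝ → V) : ℝ := sInf {C | 0 ≤ C ∧ HBound2 a b μ C f}

/-- The supremum norm of a path on `[a,b]`. -/
def SupNorm (a b : ℝ) (g : ℝ → V) : ℝ := sInf {C | 0 ≤ C ∧ ∀ t ∈ Icc a b, ‖g t‖ ≤ C}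

/-- The operator `δ` on 1-increments: `(δh)_{sut} = h_{st} - h_{su} - h_{ut}`. -/
def incr2 (h : ℝ → ℝ → V) : ℝ → ℝ → ℝ → V := fun s u t => h s t - h s u - h u t

/-- The operator `δ` on 2-increments. -/
def incr3 (h : ℝ → ℝ → ℝ → V) : ℝ → ℝ → ℝ → ℝ → V :=
  fun s u v t => h u v t - h s v t + h s u t - h s u v

/-- The two-exponent Hölder bound for 2-increments. -/
def HBound3 (a b γ ρ C : ℝ) (h : ℝ → ℝ → ℝ → V) : Prop :=
  ∀ s ∈ Icc a b, ∀ u ∈ Icc a b, ∀ t ∈ Icc a b, ‖h s u t‖ ≤ C * |u - s| ^ γ * |t - u| ^ ρ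

/-- The norm `‖h‖_{γ,ρ}` on 2-increments. -/
def HNorm3gr (a b γ ρ : ℝ) (h : ℝ → ℝ → ℝ → V) : ℝ := sInf {C | 0 ≤ C ∧ HBound3 a b γ ρ C h}

/-- `h ∈ C₃^μ([a,b];V)`: `h` admits a finite decomposition `h = Σᵢ hᵢ` with
`‖hᵢ‖_{ρᵢ,μ-ρᵢ} < ∞`, `0 < ρᵢ < μ`. -/
def Mem3 (a b μ : ℝ) (h : ℝ → ℝ → ℝ → V) : Prop :=
  ∃ (m : ℕ) (hs : Fin m → (ℝ → ℝ → ℝ → V)) (ρs : Fin m → ℝ),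
    (∀ i, 0 < ρs i ∧ ρs i < μ ∧ ∃ C, 0 ≤ C ∧ HBound3 a b (ρs i) (μ - ρs i) C (hs i)) ∧
    ∀ s ∈ Icc a b, ∀ u ∈ Icc a b, ∀ t ∈ Icc a b, h s u t = ∑ i, hs i s u t

/-- The norm `‖h‖_μ` on `C₃^μ([a,b];V)`, as an infimum over decompositions. -/
def HNorm3 (a b μ : ℝ) (h : ℝ → ℝ → ℝ → V) : ℝ :=
  sInf {c | ∃ (m : ℕ) (hs : Fin m → (ℝ → ℝ → ℝ → V)) (ρs : Fin m → ℝ),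
    (∀ i, 0 < ρs i ∧ ρs i < μ ∧ ∃ C, 0 ≤ C ∧ HBound3 a b (ρs i) (μ - ρs i) C (hs i)) ∧
    (∀ s ∈ Icc a b, ∀ u ∈ Icc a b, ∀ t ∈ Icc a b, h s u t = ∑ i, hs i s u t) ∧
    c = ∑ i, HNorm3gr a b (ρs i) (μ - ρs i) (hs i)}

/-- `C₂^{1+}`. -/
def Mem2plus (a b : ℝ) (f : ℝ → ℝ → V) : Prop := ∃ μ > 1, Mem2 a b μ f

/-- `C₃^{1+}`. -/
def Mem3plus (a b : ℝ) (h : ℝ → ℝ → ℝ → V) : Prop := ∃ μ > 1, Mem3 a b μ h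

/-- `h ∈ ker δ` (`h ∈ ZC₃([a,b];V)`). -/
def ZC3 (a b : ℝ) (h : ℝ → ℝ → ℝ → V) : Prop :=
  ∀ s ∈ Icc a b, ∀ u ∈ Icc a b, ∀ v ∈ Icc a b, ∀ t ∈ Icc a b, incr3 h s u v t = 0

/-- Defining properties of the sewing map `Λ` on `[a,b]`:
`δ ∘ Λ = Id` on `ZC₃^{1+}`, `Λ ∘ δ = Id` on `C₂^{1+}`, together with the contraction
bound `‖Λh‖_μ ≤ (2^μ - 2)⁻¹ ‖h‖_μ`. -/
def IsSewingMap (a b : ℝ) (Λ : (ℝ → ℝ → ℝ → V) → (ℝ → ℝ → V)) : Prop :=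
  (∀ h, Mem3plus a b h → ZC3 a b h → Mem2plus a b (Λ h) ∧
    ∀ s ∈ Icc a b, ∀ u ∈ Icc a b, ∀ t ∈ Icc a b, incr2 (Λ h) s u t = h s u t) ∧
  (∀ g : ℝ → ℝ → V, Mem2plus a b g →
    ∀ s ∈ Icc a b, ∀ t ∈ Icc a b, Λ (incr2 g) s t = g s t) ∧
  (∀ μ : ℝ, 1 < μ → ∀ h, Mem3 a b μ h → ZC3 a b h →
    HNorm2 a b μ (Λ h) ≤ ((2 : ℝ) ^ μ - 2)⁻¹ * HNorm3 a b μ h)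

/-- Convergence of Riemann sums along partitions of `[s,t]` whose mesh tends to `0`. -/
def RiemannLimit (s t : ℝ) (g : ℝ → ℝ → V) (L : V) : Prop :=
  ∀ ε > 0, ∃ η > 0, ∀ n : ℕ, ∀ π : Fin (n + 1) → ℝ,
    π 0 = s → π (Fin.last n) = t →
    (∀ i : Fin n, π i.castSucc ≤ π i.succ) →
    (∀ i : Fin n, π i.succ - π i.castSucc < η) →
    ‖(∑ i : Fin n, g (π i.castSucc) (π i.succ)) - L‖ < ε

/-- Hypothesis (X1): `x` is `γ`-Hölder with `γ > 1/4` and admits a Lévy area `x²` and a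
volume element `x³` satisfying Chen's relations. -/
structure HypX1 (T γ : ℝ) (d : ℕ) (x : ℝ → Fin d → ℝ)
    (x2 : ℝ → ℝ → Fin d → Fin d → ℝ) (x3 : ℝ → ℝ → Fin d → Fin d → Fin d → ℝ) : Prop where
  hγ : 1 / 4 < γ
  hx : Mem2 0 T γ (fun s t => x t - x s)
  hx2 : Mem2 0 T (2 * γ) x2
  hx3 : Mem2 0 T (3 * γ) x3
  chen2 : ∀ s ∈ Icc (0 : ℝ) T, ∀ u ∈ Icc (0 : ℝ) T, ∀ t ∈ Icc (0 : ℝ) T, ∀ i j,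
    x2 s t i j - x2 s u i j - x2 u t i j = (x u i - x s i) * (x t j - x u j)
  chen3 : ∀ s ∈ Icc (0 : ℝ) T, ∀ u ∈ Icc (0 : ℝ) T, ∀ t ∈ Icc (0 : ℝ) T, ∀ i j k,
    x3 s t i j k - x3 s u i j k - x3 u t i j k
      = x2 s u i j * (x t k - x u k) + (x u i - x s i) * x2 u t j k

/-- Hypothesis (X2): geometricity, `x²_{st} + (x²_{st})^* = δx_{st} ⊗ δx_{st}`. -/
def HypX2 (T : ℝ) {d : ℕ} (x : ℝ → Fin d → ℝ) (x2 : ℝ → ℝ → Fin d → Fin d → ℝ) : Prop :=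
  ∀ s ∈ Icc (0 : ℝ) T, ∀ t ∈ Icc (0 : ℝ) T, ∀ i j,
    x2 s t i j + x2 s t j i = (x t i - x s i) * (x t j - x s j)

/-- A weakly controlled path `z ∈ Q_{κ,a,b}(ℝ^l)`, with data `(z, ζ¹, ζ², r, ρ)`:
`δz^i = (ζ¹)^{ij} δx^j + (ζ²)^{ijk} (x²)^{kj} + r^i` and
`δ(ζ¹)^{ij} = (ζ²)^{ijk} δx^k + ρ^{ij}`. -/
structure WCP (T κ : ℝ) {d l : ℕ} (x : ℝ → Fin d → ℝ) (x2 : ℝ → ℝ → Fin d → Fin d → ℝ)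
    (a : Fin l → ℝ) (b : Fin l → Fin d → ℝ)
    (z : ℝ → Fin l → ℝ) (ζ1 : ℝ → Fin l → Fin d → ℝ) (ζ2 : ℝ → Fin l → Fin d → Fin d → ℝ)
    (r : ℝ → ℝ → Fin l → ℝ) (ρ : ℝ → ℝ → Fin l → Fin d → ℝ) : Prop where
  init : z 0 = a
  init1 : ζ1 0 = b
  hz : Mem2 0 T κ (fun s t => z t - z s)
  hζ1 : Mem2 0 T κ (fun s t => ζ1 t - ζ1 s)
  hζ2 : Mem2 0 T κ (fun s t => ζ2 t - ζ2 s)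
  hr : Mem2 0 T (3 * κ) r
  hρ : Mem2 0 T (2 * κ) ρ
  decomp : ∀ s ∈ Icc (0 : ℝ) T, ∀ t ∈ Icc (0 : ℝ) T, ∀ i,
    z t i - z s i = (∑ j, ζ1 s i j * (x t j - x s j))
      + (∑ j, ∑ k, ζ2 s i j k * x2 s t k j) + r s t i
  decompζ : ∀ s ∈ Icc (0 : ℝ) T, ∀ t ∈ Icc (0 : ℝ) T, ∀ i j,
    ζ1 t i j - ζ1 s i j = (∑ k, ζ2 s i j k * (x t k - x s k)) + ρ s t i j

/-- The natural semi-norm `N[z; Q_{κ,a,b}]` on weakly controlled paths. -/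
def QNorm (T κ : ℝ) {d l : ℕ}
    (z : ℝ → Fin l → ℝ) (ζ1 : ℝ → Fin l → Fin d → ℝ) (ζ2 : ℝ → Fin l → Fin d → Fin d → ℝ)
    (r : ℝ → ℝ → Fin l → ℝ) (ρ : ℝ → ℝ → Fin l → Fin d → ℝ) : ℝ :=
  HNorm2 0 T κ (fun s t => z t - z s)
    + SupNorm 0 T ζ1 + HNorm2 0 T κ (fun s t => ζ1 t - ζ1 s)
    + SupNorm 0 T ζ2 + HNorm2 0 T κ (fun s t => ζ2 t - ζ2 s)
    + HNorm2 0 T (2 * κ) ρ + HNorm2 0 T (3 * κ) r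

/-- `φ ∈ C_b^N`: `N` times continuously differentiable, bounded with bounded derivatives. -/
def CbN {E F : Type*} [NormedAddCommGroup E] [NormedSpace ℝ E]
    [NormedAddCommGroup F] [NormedSpace ℝ F] (N : ℕ) (φ : E → F) : Prop :=
  ContDiff ℝ N φ ∧ ∀ i : ℕ, i ≤ N → ∃ C, ∀ y, ‖iteratedFDeriv ℝ i φ y‖ ≤ C

/-- Partial derivative `∂ᵢφ(y)`. -/
def pd {l : ℕ} (φ : (Fin l → ℝ) → ℝ) (y : Fin l → ℝ) (i : Fin l) : ℝ :=
  fderiv ℝ φ y (Pi.single i 1)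

/-- Second partial derivative `∂²_{i₁ i₂}φ(y)`. -/
def pd2 {l : ℕ} (φ : (Fin l → ℝ) → ℝ) (y : Fin l → ℝ) (i₁ i₂ : Fin l) : ℝ :=
  fderiv ℝ (fun w => fderiv ℝ φ w (Pi.single i₁ 1)) y (Pi.single i₂ 1)


/- ───────────────────────── auxiliary lemmas ───────────────────────── -/

set_option maxHeartbeats 2000000

section AuxNorm
variable {W : Type*} [NormedAddCommGroup W]

lemma hnorm2_nonneg {a b μ : ℝ} {f : ℝ → ℝ → W} (hf : Mem2 a b μ f) : 0 ≤ HNorm2 a b μ f :=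
  le_csInf hf fun _ hC => hC.1

lemma hnorm2_le {a b μ C : ℝ} {f : ℝ → ℝ → W} (hC : 0 ≤ C) (h : HBound2 a b μ C f) :
    HNorm2 a b μ f ≤ C :=
  csInf_le ⟨0, fun _ hD => hD.1⟩ ⟨hC, h⟩

lemma hnorm2_bound {a b μ : ℝ} (hμ : 0 < μ) {f : ℝ → ℝ → W} (hf : Mem2 a b μ f) :
    HBound2 a b μ (HNorm2 a b μ f) f := by
  intro s hs t ht
  rcases eq_or_lt_of_le (abs_nonneg (t - s)) with h0 | h0
  · obtain ⟨C, hC0, hC⟩ := hf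
    have h2 := hC s hs t ht
    rw [← h0, Real.zero_rpow hμ.ne'] at h2 ⊢
    simpa using h2
  · have hpos : (0:ℝ) < |t - s| ^ μ := Real.rpow_pos_of_pos h0 μ
    rw [← div_le_iff₀ hpos]
    refine le_csInf hf fun C hC => ?_
    rw [div_le_iff₀ hpos]
    exact hC.2 s hs t ht

lemma supnorm_nonneg {a b : ℝ} {g : ℝ → W} (hg : ∃ C, 0 ≤ C ∧ ∀ t ∈ Icc a b, ‖g t‖ ≤ C) :
    0 ≤ SupNorm a b g :=
  le_csInf hg fun _ hC => hC.1

lemma supnorm_le {a b C : ℝ} {g : ℝ → W} (hC : 0 ≤ C) (h : ∀ t ∈ Icc a b, ‖g t‖ ≤ C) :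
    SupNorm a b g ≤ C :=
  csInf_le ⟨0, fun _ hD => hD.1⟩ ⟨hC, h⟩

lemma supnorm_bound {a b : ℝ} {g : ℝ → W} (hg : ∃ C, 0 ≤ C ∧ ∀ t ∈ Icc a b, ‖g t‖ ≤ C) :
    ∀ t ∈ Icc a b, ‖g t‖ ≤ SupNorm a b g := by
  intro t ht
  exact le_csInf hg fun C hC => hC.2 t ht

end AuxNorm

lemma sum_abs_le {m : ℕ} {c : ℝ} (f : Fin m → ℝ) (h : ∀ i, |f i| ≤ c) :
    |∑ i, f i| ≤ m * c := by
  calc |∑ i, f i| ≤ ∑ i, |f i| := Finset.abs_sum_le_sum_abs _ _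
    _ ≤ ∑ _i : Fin m, c := Finset.sum_le_sum fun i _ => h i
    _ = m * c := by simp [Finset.sum_const, mul_comm]

lemma mul_bound {a b c d : ℝ} (h1 : |a| ≤ b) (h2 : |c| ≤ d) : |a * c| ≤ b * d := by
  rw [abs_mul]
  exact mul_le_mul h1 h2 (abs_nonneg _) (le_trans (abs_nonneg _) h1)

lemma abs_add3 (a b c : ℝ) : |a + b + c| ≤ |a| + |b| + |c| :=
  le_trans (abs_add_le _ _) (add_le_add_left (abs_add_le a b) _)

lemma abs_add4 (a b c d : ℝ) : |a + b + c + d| ≤ |a| + |b| + |c| + |d| :=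
  le_trans (abs_add_le _ _) (add_le_add_left (abs_add3 a b c) _)

lemma cube_ge1 {M : ℝ} (h : 0 ≤ M) : M ≤ (1 + M) ^ 3 := by nlinarith [sq_nonneg M, mul_nonneg (mul_nonneg h h) h]
lemma cube_ge2 {M : ℝ} (h : 0 ≤ M) : M * M ≤ (1 + M) ^ 3 := by nlinarith [sq_nonneg M, mul_nonneg (mul_nonneg h h) h]
lemma cube_ge3 {M : ℝ} (h : 0 ≤ M) : M * M * M ≤ (1 + M) ^ 3 := by nlinarith [sq_nonneg M, mul_nonneg (mul_nonneg h h) h]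
lemma cube_ge0 {M : ℝ} (h : 0 ≤ M) : 1 ≤ (1 + M) ^ 3 := by nlinarith [sq_nonneg M, mul_nonneg (mul_nonneg h h) h]
lemma cube_le8 {M : ℝ} (h : 0 ≤ M) : (1 + M) ^ 3 ≤ 8 * (1 + M ^ 3) := by nlinarith [sq_nonneg (M - 1), sq_nonneg (M + 1), sq_nonneg M]

lemma rpow_split' (u : ℝ) (hu : 0 ≤ u) (p q pq : ℝ) (hpq : p + q = pq) (h0 : pq ≠ 0) :
    u ^ pq = u ^ p * u ^ q := by subst hpq; exact Real.rpow_add' hu h0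

lemma sum4_reindex {l d : ℕ} (f : Fin l → Fin l → Fin d → Fin d → ℝ) :
    ∑ i₁, ∑ i₂, ∑ j, ∑ k, f i₁ i₂ j k = ∑ i₁, ∑ i₂, ∑ j, ∑ k, f i₂ i₁ k j := by
  rw [Finset.sum_comm]
  refine Finset.sum_congr rfl fun a _ => ?_
  refine Finset.sum_congr rfl fun b _ => ?_
  exact Finset.sum_comm

section Taylor
variable {E F : Type*} [NormedAddCommGroup E] [NormedSpace ℝ E]
  [NormedAddCommGroup F] [NormedSpace ℝ F]

lemma seg_norm_le {x y w : E} (hw : w ∈ segment ℝ x y) : ‖w - x‖ ≤ ‖y - x‖ := by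
  obtain ⟨a, b, ha, hb, hab, rfl⟩ := hw
  have ha' : a = 1 - b := by linarith
  have h1 : a • x + b • y - x = b • (y - x) := by
    rw [ha', sub_smul, one_smul, smul_sub]; abel
  rw [h1, norm_smul, Real.norm_eq_abs, abs_of_nonneg hb]
  exact mul_le_of_le_one_left (norm_nonneg _) (by linarith)

lemma taylor2 {f : E → F} {f' : E → E →L[ℝ] F} (hd : ∀ y, HasFDerivAt f (f' y) y)
    {K : ℝ} (hK : 0 ≤ K) (hlip : ∀ v w, ‖f' v - f' w‖ ≤ K * ‖v - w‖) (x y : E) :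
    ‖f y - f x - f' x (y - x)‖ ≤ K * ‖y - x‖ ^ 2 := by
  set g : E → F := fun w => f w - f' x w with hg
  have hgd : ∀ w, HasFDerivAt g (f' w - f' x) w := fun w => (hd w).sub ((f' x).hasFDerivAt)
  have key : ‖g y - g x‖ ≤ (K * ‖y - x‖) * ‖y - x‖ := by
    refine Convex.norm_image_sub_le_of_norm_fderiv_le
      (fun w _ => (hgd w).differentiableAt) ?_ (convex_segment x y)
      (left_mem_segment ℝ x y) (right_mem_segment ℝ x y)
    intro w hw
    rw [(hgd w).fderiv]
    calc ‖f' w - f' x‖ ≤ K * ‖w - x‖ := hlip w x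
      _ ≤ K * ‖y - x‖ := mul_le_mul_of_nonneg_left (seg_norm_le hw) hK
  have h2 : g y - g x = f y - f x - f' x (y - x) := by
    simp only [hg, map_sub]; abel
  rw [h2] at key
  calc ‖f y - f x - f' x (y - x)‖ ≤ (K * ‖y - x‖) * ‖y - x‖ := key
    _ = K * ‖y - x‖ ^ 2 := by ring

lemma taylor3 {f : E → F} {f' : E → E →L[ℝ] F} {f'' : E → E →L[ℝ] E →L[ℝ] F}
    (hd : ∀ y, HasFDerivAt f (f' y) y) (hd2 : ∀ y, HasFDerivAt f' (f'' y) y)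
    {K : ℝ} (hK : 0 ≤ K) (hlip : ∀ v w, ‖f'' v - f'' w‖ ≤ K * ‖v - w‖) (x y : E) :
    ‖f y - f x - f' x (y - x) - (1/2 : ℝ) • (f'' x (y - x)) (y - x)‖ ≤ K * ‖y - x‖ ^ 3 := by
  have hsym : ∀ v w, f'' x v w = f'' x w v := second_derivative_symmetric hd (hd2 x)
  set B := f'' x with hB
  have hbb : IsBoundedBilinearMap ℝ (fun p : E × E => B p.1 p.2) := B.isBoundedBilinearMap
  have hqd : ∀ w : E, HasFDerivAt (fun w => (1/2 : ℝ) • B (w - x) (w - x)) (B (w - x)) w := by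
    intro w
    have hi : HasFDerivAt (fun w : E => (w - x, w - x))
        ((ContinuousLinearMap.id ℝ E).prod (ContinuousLinearMap.id ℝ E)) w :=
      ((hasFDerivAt_id w).sub_const x).prodMk ((hasFDerivAt_id w).sub_const x)
    have ho := (hbb.hasFDerivAt (w - x, w - x)).comp w hi
    have h2 := ho.const_smul (1/2 : ℝ)
    have heq : (1/2 : ℝ) • ((hbb.deriv (w - x, w - x)).comp
        ((ContinuousLinearMap.id ℝ E).prod (ContinuousLinearMap.id ℝ E))) = B (w - x) := by
      ext v
      simp only [ContinuousLinearMap.smul_apply, ContinuousLinearMap.coe_comp',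
        Function.comp_apply, ContinuousLinearMap.prod_apply, ContinuousLinearMap.coe_id',
        id_eq, IsBoundedBilinearMap.deriv_apply]
      rw [hsym v (w - x), ← two_smul ℝ, smul_smul]
      norm_num
    rw [heq] at h2
    exact h2
  set g : E → F := fun w => f w - f' x w - (1/2 : ℝ) • B (w - x) (w - x) with hg
  have hgd : ∀ w, HasFDerivAt g (f' w - f' x - B (w - x)) w :=
    fun w => ((hd w).sub ((f' x).hasFDerivAt)).sub (hqd w)
  have key : ‖g y - g x‖ ≤ (K * ‖y - x‖ ^ 2) * ‖y - x‖ := by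
    refine Convex.norm_image_sub_le_of_norm_fderiv_le
      (fun w _ => (hgd w).differentiableAt) ?_ (convex_segment x y)
      (left_mem_segment ℝ x y) (right_mem_segment ℝ x y)
    intro w hw
    rw [(hgd w).fderiv]
    calc ‖f' w - f' x - B (w - x)‖ ≤ K * ‖w - x‖ ^ 2 := taylor2 hd2 hK hlip x w
      _ ≤ K * ‖y - x‖ ^ 2 := by gcongr; exact seg_norm_le hw
  have h2 : g y - g x = f y - f x - f' x (y - x) - (1/2 : ℝ) • (B (y - x)) (y - x) := by
    simp only [hg, map_sub, sub_self]
    simp only [ContinuousLinearMap.map_zero, ContinuousLinearMap.zero_apply, smul_zero]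
    abel
  rw [h2] at key
  calc ‖f y - f x - f' x (y - x) - (1/2 : ℝ) • (B (y - x)) (y - x)‖
      ≤ (K * ‖y - x‖ ^ 2) * ‖y - x‖ := key
    _ = K * ‖y - x‖ ^ 3 := by ring

lemma clm_sum {l : ℕ} (L : (Fin l → ℝ) →L[ℝ] F) (v : Fin l → ℝ) :
    L v = ∑ i, v i • L (Pi.single i 1) := by
  conv_lhs => rw [← Finset.univ_sum_single v, map_sum]
  refine Finset.sum_congr rfl fun i _ => ?_
  have h1 : Pi.single i (v i) = v i • (Pi.single i (1:ℝ) : Fin l → ℝ) := by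
    rw [← Pi.single_smul, smul_eq_mul, mul_one]
  rw [h1, ContinuousLinearMap.map_smul]

end Taylor

section PhiFacts
variable {l : ℕ} (φ : (Fin l → ℝ) → ℝ)

lemma single_norm_le (i : Fin l) : ‖(Pi.single i (1:ℝ) : Fin l → ℝ)‖ ≤ 1 := by
  rw [pi_norm_le_iff_of_nonneg zero_le_one]
  intro j
  rw [Real.norm_eq_abs, Pi.single_apply]
  split <;> simp

lemma phi_facts (hφ : CbN 3 φ) :
    ∃ K : ℝ, 1 ≤ K ∧
      (∀ y i, |pd φ y i| ≤ K) ∧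
      (∀ y i₁ i₂, |pd2 φ y i₁ i₂| ≤ K) ∧
      (∀ y w, |φ w - φ y| ≤ K * ‖w - y‖) ∧
      (∀ y w i, |pd φ w i - pd φ y i| ≤ K * ‖w - y‖) ∧
      (∀ y w i₁ i₂, |pd2 φ w i₁ i₂ - pd2 φ y i₁ i₂| ≤ K * ‖w - y‖) ∧
      (∀ y w i, |pd φ w i - pd φ y i - ∑ i₂, pd2 φ y i i₂ * (w i₂ - y i₂)| ≤ K * ‖w - y‖ ^ 2) ∧
      (∀ y w, |φ w - φ y - (∑ i, pd φ y i * (w i - y i))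
        - (1/2 : ℝ) * ∑ i₁, ∑ i₂, pd2 φ y i₁ i₂ * (w i₁ - y i₁) * (w i₂ - y i₂)|
          ≤ K * ‖w - y‖ ^ 3) ∧
      (∀ y i₁ i₂, pd2 φ y i₁ i₂ = pd2 φ y i₂ i₁) := by
  obtain ⟨hcd, hbd⟩ := hφ
  obtain ⟨C1, hC1⟩ := hbd 1 (by norm_num)
  obtain ⟨C2, hC2⟩ := hbd 2 (by norm_num)
  obtain ⟨C3, hC3⟩ := hbd 3 (by norm_num)
  set f1 := fderiv ℝ φ with hf1
  set f2 := fderiv ℝ f1 with hf2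
  letI i2 : NormedAddCommGroup ((Fin l → ℝ) →L[ℝ] (Fin l → ℝ) →L[ℝ] ℝ) := inferInstance
  letI i2' : NormedSpace ℝ ((Fin l → ℝ) →L[ℝ] (Fin l → ℝ) →L[ℝ] ℝ) := inferInstance
  have hφd : Differentiable ℝ φ := hcd.differentiable (by norm_num)
  have hf1cd : ContDiff ℝ 2 f1 := hcd.fderiv_right (by norm_num)
  have hf1d : Differentiable ℝ f1 := hf1cd.differentiable (by norm_num)
  have hf2cd : ContDiff ℝ 1 f2 := hf1cd.fderiv_right (by norm_num)
  have hf2d : Differentiable ℝ f2 := hf2cd.differentiable (by norm_num)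
  have hn1 : ∀ y, ‖f1 y‖ ≤ C1 := by
    intro y
    calc ‖f1 y‖ = ‖iteratedFDeriv ℝ 0 f1 y‖ := (norm_iteratedFDeriv_zero).symm
      _ = ‖iteratedFDeriv ℝ 1 φ y‖ := norm_iteratedFDeriv_fderiv
      _ ≤ C1 := hC1 y
  have hn2 : ∀ y, ‖f2 y‖ ≤ C2 := by
    intro y
    calc ‖f2 y‖ = ‖iteratedFDeriv ℝ 0 f2 y‖ := (norm_iteratedFDeriv_zero).symm
      _ = ‖iteratedFDeriv ℝ 1 f1 y‖ := norm_iteratedFDeriv_fderiv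
      _ = ‖iteratedFDeriv ℝ 2 φ y‖ := norm_iteratedFDeriv_fderiv
      _ ≤ C2 := hC2 y
  have hn3 : ∀ y, ‖fderiv ℝ f2 y‖ ≤ C3 := by
    intro y
    calc ‖fderiv ℝ f2 y‖ = ‖iteratedFDeriv ℝ 0 (fderiv ℝ f2) y‖ := (norm_iteratedFDeriv_zero).symm
      _ = ‖iteratedFDeriv ℝ 1 f2 y‖ := norm_iteratedFDeriv_fderiv
      _ = ‖iteratedFDeriv ℝ 2 f1 y‖ := norm_iteratedFDeriv_fderiv
      _ = ‖iteratedFDeriv ℝ 3 φ y‖ := norm_iteratedFDeriv_fderiv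
      _ ≤ C3 := hC3 y
  set K := max 1 (max C1 (max C2 C3)) with hKdef
  have hK1 : (1:ℝ) ≤ K := le_max_left _ _
  have hK0 : (0:ℝ) ≤ K := by linarith
  have hC1K : C1 ≤ K := le_trans (le_max_left _ _) (le_max_right _ _)
  have hC2K : C2 ≤ K := le_trans (le_trans (le_max_left _ _) (le_max_right _ _)) (le_max_right _ _)
  have hC3K : C3 ≤ K := le_trans (le_trans (le_max_right _ _) (le_max_right _ _)) (le_max_right _ _)
  have hφlip : ∀ y w : Fin l → ℝ, ‖φ w - φ y‖ ≤ K * ‖w - y‖ := by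
    intro y w
    exact Convex.norm_image_sub_le_of_norm_fderiv_le (fun v _ => (hφd v))
      (fun v _ => le_trans (hn1 v) hC1K) convex_univ (mem_univ y) (mem_univ w)
  have hf1lip : ∀ y w : Fin l → ℝ, ‖f1 w - f1 y‖ ≤ K * ‖w - y‖ := by
    intro y w
    exact Convex.norm_image_sub_le_of_norm_fderiv_le (fun v _ => (hf1d v))
      (fun v _ => le_trans (hn2 v) hC2K) convex_univ (mem_univ y) (mem_univ w)
  have hf2lip : ∀ w y : Fin l → ℝ, ‖f2 w - f2 y‖ ≤ K * ‖w - y‖ := by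
    intro y w
    exact Convex.norm_image_sub_le_of_norm_fderiv_le (fun v _ => (hf2d v))
      (fun v _ => le_trans (hn3 v) hC3K) convex_univ (mem_univ w) (mem_univ y)
  have hpdeq : ∀ y i, pd φ y i = f1 y (Pi.single i 1) := fun y i => rfl
  have hpd2eq : ∀ y i₁ i₂, pd2 φ y i₁ i₂ = (f2 y (Pi.single i₂ 1)) (Pi.single i₁ 1) := by
    intro y i₁ i₂
    have h2 : HasFDerivAt (fun w => (f1 w) (Pi.single i₁ (1:ℝ)))
        ((ContinuousLinearMap.apply ℝ ℝ (Pi.single i₁ (1:ℝ))).comp (f2 y)) y := by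
      have h0 := ((ContinuousLinearMap.apply ℝ ℝ (Pi.single i₁ (1:ℝ))).hasFDerivAt
        (x := f1 y)).comp y (hf1d y).hasFDerivAt
      exact h0
    show fderiv ℝ (fun w => (f1 w) (Pi.single i₁ (1:ℝ))) y (Pi.single i₂ 1) = _
    rw [h2.fderiv]
    simp [ContinuousLinearMap.apply]
  have hsym2 : ∀ y (i₁ i₂ : Fin l), pd2 φ y i₁ i₂ = pd2 φ y i₂ i₁ := by
    intro y i₁ i₂
    rw [hpd2eq, hpd2eq]
    exact second_derivative_symmetric (f' := f1) (fun v => (hφd v).hasFDerivAt)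
      (hf1d y).hasFDerivAt _ _
  refine ⟨K, hK1, ?_, ?_, ?_, ?_, ?_, ?_, ?_, hsym2⟩
  · intro y i
    rw [← Real.norm_eq_abs, hpdeq]
    calc ‖f1 y (Pi.single i 1)‖ ≤ ‖f1 y‖ * ‖(Pi.single i (1:ℝ) : Fin l → ℝ)‖ :=
          (f1 y).le_opNorm _
      _ ≤ K * 1 := mul_le_mul (le_trans (hn1 y) hC1K) (single_norm_le i) (norm_nonneg _) hK0
      _ = K := mul_one K
  · intro y i₁ i₂
    rw [← Real.norm_eq_abs, hpd2eq]
    calc ‖(f2 y (Pi.single i₂ 1)) (Pi.single i₁ 1)‖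
        ≤ ‖f2 y (Pi.single i₂ 1)‖ * ‖(Pi.single i₁ (1:ℝ) : Fin l → ℝ)‖ :=
          (f2 y (Pi.single i₂ 1)).le_opNorm _
      _ ≤ (‖f2 y‖ * ‖(Pi.single i₂ (1:ℝ) : Fin l → ℝ)‖) * 1 :=
          mul_le_mul ((f2 y).le_opNorm _) (single_norm_le i₁) (norm_nonneg _) (by positivity)
      _ ≤ (K * 1) * 1 := by
          have := mul_le_mul (le_trans (hn2 y) hC2K) (single_norm_le i₂) (norm_nonneg _) hK0
          nlinarith
      _ = K := by ring
  · intro y w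
    rw [← Real.norm_eq_abs]
    exact hφlip y w
  · intro y w i
    rw [← Real.norm_eq_abs, hpdeq, hpdeq, ← ContinuousLinearMap.sub_apply]
    calc ‖(f1 w - f1 y) (Pi.single i 1)‖
        ≤ ‖f1 w - f1 y‖ * ‖(Pi.single i (1:ℝ) : Fin l → ℝ)‖ := (f1 w - f1 y).le_opNorm _
      _ ≤ (K * ‖w - y‖) * 1 :=
          mul_le_mul (hf1lip y w) (single_norm_le i) (norm_nonneg _) (by positivity)
      _ = K * ‖w - y‖ := mul_one _
  · intro y w i₁ i₂
    rw [← Real.norm_eq_abs, hpd2eq, hpd2eq, ← ContinuousLinearMap.sub_apply,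
      ← ContinuousLinearMap.sub_apply]
    calc ‖((f2 w - f2 y) (Pi.single i₂ 1)) (Pi.single i₁ 1)‖
        ≤ ‖(f2 w - f2 y) (Pi.single i₂ 1)‖ * ‖(Pi.single i₁ (1:ℝ) : Fin l → ℝ)‖ :=
          ContinuousLinearMap.le_opNorm _ _
      _ ≤ (‖f2 w - f2 y‖ * ‖(Pi.single i₂ (1:ℝ) : Fin l → ℝ)‖) * 1 :=
          mul_le_mul ((f2 w - f2 y).le_opNorm _) (single_norm_le i₁) (norm_nonneg _)
            (by positivity)
      _ ≤ ((K * ‖w - y‖) * 1) * 1 := by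
          have := mul_le_mul (hf2lip w y) (single_norm_le i₂) (norm_nonneg _)
            (by positivity : (0:ℝ) ≤ K * ‖w - y‖)
          nlinarith
      _ = K * ‖w - y‖ := by ring
  · intro y w i
    have t2 := taylor2 (f := f1) (f' := f2) (fun v => (hf1d v).hasFDerivAt) hK0
      (fun v w' => hf2lip v w') y w
    have hsum : (f2 y (w - y)) (Pi.single i 1) = ∑ i₂, pd2 φ y i i₂ * (w i₂ - y i₂) := by
      rw [clm_sum (f2 y) (w - y), ContinuousLinearMap.sum_apply]
      refine Finset.sum_congr rfl fun i₂ _ => ?_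
      rw [ContinuousLinearMap.smul_apply, ← hpd2eq, Pi.sub_apply, smul_eq_mul]
      ring
    rw [← Real.norm_eq_abs, hpdeq, hpdeq, ← hsum, ← ContinuousLinearMap.sub_apply,
      ← ContinuousLinearMap.sub_apply]
    calc ‖(f1 w - f1 y - f2 y (w - y)) (Pi.single i 1)‖
        ≤ ‖f1 w - f1 y - f2 y (w - y)‖ * ‖(Pi.single i (1:ℝ) : Fin l → ℝ)‖ :=
          ContinuousLinearMap.le_opNorm _ _
      _ ≤ (K * ‖w - y‖ ^ 2) * 1 :=
          mul_le_mul t2 (single_norm_le i) (norm_nonneg _) (by positivity)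
      _ = K * ‖w - y‖ ^ 2 := mul_one _
  · intro y w
    have t3 := taylor3 (f := φ) (f' := f1) (f'' := f2) (fun v => (hφd v).hasFDerivAt)
      (fun v => (hf1d v).hasFDerivAt) hK0 (fun v w' => hf2lip v w') y w
    have h1 : f1 y (w - y) = ∑ i, pd φ y i * (w i - y i) := by
      rw [clm_sum (f1 y) (w - y)]
      refine Finset.sum_congr rfl fun i _ => ?_
      rw [Pi.sub_apply, smul_eq_mul, ← hpdeq]
      ring
    have h2 : (f2 y (w - y)) (w - y)
        = ∑ i₁, ∑ i₂, pd2 φ y i₁ i₂ * (w i₁ - y i₁) * (w i₂ - y i₂) := by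
      calc (f2 y (w - y)) (w - y)
          = ∑ i₂, (w - y) i₂ * ((f2 y (Pi.single i₂ 1)) (w - y)) := by
            rw [clm_sum (f2 y) (w - y), ContinuousLinearMap.sum_apply]
            exact Finset.sum_congr rfl fun i₂ _ => by
              rw [ContinuousLinearMap.smul_apply, smul_eq_mul]
        _ = ∑ i₂, ∑ i₁, pd2 φ y i₁ i₂ * (w i₁ - y i₁) * (w i₂ - y i₂) := by
            refine Finset.sum_congr rfl fun i₂ _ => ?_
            rw [clm_sum (f2 y (Pi.single i₂ 1)) (w - y), Finset.mul_sum]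
            refine Finset.sum_congr rfl fun i₁ _ => ?_
            rw [smul_eq_mul, ← hpd2eq, Pi.sub_apply, Pi.sub_apply]
            ring
        _ = ∑ i₁, ∑ i₂, pd2 φ y i₁ i₂ * (w i₁ - y i₁) * (w i₂ - y i₂) := Finset.sum_comm
    rw [smul_eq_mul] at t3
    rw [← Real.norm_eq_abs, ← h1, ← h2]
    exact t3

end PhiFacts


section MainLemma

/-- The composed path data. -/
def Zh {l : ℕ} (φ : (Fin l → ℝ) → ℝ) (z : ℝ → Fin l → ℝ) : ℝ → Fin 1 → ℝ :=
  fun t _ => φ (z t)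

def Z1h {d l : ℕ} (φ : (Fin l → ℝ) → ℝ) (z : ℝ → Fin l → ℝ)
    (ζ1 : ℝ → Fin l → Fin d → ℝ) : ℝ → Fin 1 → Fin d → ℝ :=
  fun t _ j => ∑ i, pd φ (z t) i * ζ1 t i j

def Z2h {d l : ℕ} (φ : (Fin l → ℝ) → ℝ) (z : ℝ → Fin l → ℝ)
    (ζ1 : ℝ → Fin l → Fin d → ℝ) (ζ2 : ℝ → Fin l → Fin d → Fin d → ℝ) :
    ℝ → Fin 1 → Fin d → Fin d → ℝ :=
  fun t _ j k => (∑ i, pd φ (z t) i * ζ2 t i j k)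
    + ∑ i₁, ∑ i₂, pd2 φ (z t) i₁ i₂ * ζ1 t i₁ j * ζ1 t i₂ k

def Rh {d l : ℕ} (φ : (Fin l → ℝ) → ℝ) (x : ℝ → Fin d → ℝ)
    (x2 : ℝ → ℝ → Fin d → Fin d → ℝ) (z : ℝ → Fin l → ℝ)
    (ζ1 : ℝ → Fin l → Fin d → ℝ) (ζ2 : ℝ → Fin l → Fin d → Fin d → ℝ) :
    ℝ → ℝ → Fin 1 → ℝ :=
  fun s t e => (φ (z t) - φ (z s)) - (∑ j, Z1h φ z ζ1 s e j * (x t j - x s j))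
    - ∑ j, ∑ k, Z2h φ z ζ1 ζ2 s e j k * x2 s t k j

def Ph {d l : ℕ} (φ : (Fin l → ℝ) → ℝ) (x : ℝ → Fin d → ℝ) (z : ℝ → Fin l → ℝ)
    (ζ1 : ℝ → Fin l → Fin d → ℝ) (ζ2 : ℝ → Fin l → Fin d → Fin d → ℝ) :
    ℝ → ℝ → Fin 1 → Fin d → ℝ :=
  fun s t e j => (Z1h φ z ζ1 t e j - Z1h φ z ζ1 s e j)
    - ∑ k, Z2h φ z ζ1 ζ2 s e j k * (x t k - x s k)

lemma pi1_abs {m : ℕ} (g : Fin m → ℝ) (i : Fin m) : |g i| ≤ ‖g‖ := by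
  have := norm_le_pi_norm g i
  rwa [Real.norm_eq_abs] at this

lemma pi2_abs {m n : ℕ} (g : Fin m → Fin n → ℝ) (i : Fin m) (j : Fin n) : |g i j| ≤ ‖g‖ :=
  le_trans (pi1_abs (g i) j) (norm_le_pi_norm g i)

lemma pi3_abs {m n p : ℕ} (g : Fin m → Fin n → Fin p → ℝ) (i : Fin m) (j : Fin n) (k : Fin p) :
    |g i j k| ≤ ‖g‖ :=
  le_trans (pi2_abs (g i) j k) (norm_le_pi_norm g i)

lemma main_estimate (T γ κ : ℝ) (hT : 0 < T) (d l : ℕ)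
    (x : ℝ → Fin d → ℝ) (x2 : ℝ → ℝ → Fin d → Fin d → ℝ)
    (x3 : ℝ → ℝ → Fin d → Fin d → Fin d → ℝ)
    (hX1 : HypX1 T γ d x x2 x3) (hX2 : HypX2 T x x2)
    (hκ0 : 0 < κ) (hκγ : κ ≤ γ) (hsum : 1 < 3 * κ + γ)
    (φ : (Fin l → ℝ) → ℝ) (hφ : CbN 3 φ) :
    ∃ c : ℝ, 0 ≤ c ∧
      ∀ (a : Fin l → ℝ) (b : Fin l → Fin d → ℝ)
        (z : ℝ → Fin l → ℝ) (ζ1 : ℝ → Fin l → Fin d → ℝ)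
        (ζ2 : ℝ → Fin l → Fin d → Fin d → ℝ)
        (r : ℝ → ℝ → Fin l → ℝ) (ρ : ℝ → ℝ → Fin l → Fin d → ℝ),
        WCP T κ x x2 a b z ζ1 ζ2 r ρ →
        WCP T κ x x2 (fun _ : Fin 1 => φ a) (fun _ : Fin 1 => fun j => ∑ i, pd φ a i * b i j)
            (Zh φ z) (Z1h φ z ζ1) (Z2h φ z ζ1 ζ2) (Rh φ x x2 z ζ1 ζ2) (Ph φ x z ζ1 ζ2) ∧
          QNorm T κ (Zh φ z) (Z1h φ z ζ1) (Z2h φ z ζ1 ζ2) (Rh φ x x2 z ζ1 ζ2)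
              (Ph φ x z ζ1 ζ2)
            ≤ c * (1 + QNorm T κ z ζ1 ζ2 r ρ ^ 3) := by
  obtain ⟨K, hK1, hpdK, hpd2K, hφlip, hpdlip, hpd2lip, htay2, htay3, hsym2⟩ := phi_facts φ hφ
  have hK0 : (0:ℝ) ≤ K := by linarith
  have hγ0 : 0 < γ := lt_of_lt_of_le hκ0 hκγ
  obtain ⟨Cx, hCx0, hCx⟩ := hX1.hx
  obtain ⟨Cx2, hCx20, hCx2⟩ := hX1.hx2
  set CX : ℝ := Cx * T ^ (γ - κ) with hCXdef
  set CX2 : ℝ := Cx2 * T ^ (2*γ - 2*κ) with hCX2def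
  have hCX0 : 0 ≤ CX := mul_nonneg hCx0 (Real.rpow_nonneg hT.le _)
  have hCX20 : 0 ≤ CX2 := mul_nonneg hCx20 (Real.rpow_nonneg hT.le _)
  set W : ℝ := (d:ℝ) * d * CX2 + T ^ (κ:ℝ) with hWdef
  have hTκ0 : 0 ≤ T ^ (κ:ℝ) := Real.rpow_nonneg hT.le _
  have hd0 : (0:ℝ) ≤ (d:ℝ) := Nat.cast_nonneg d
  have hl0 : (0:ℝ) ≤ (l:ℝ) := Nat.cast_nonneg l
  have hW0 : 0 ≤ W := by
    have : 0 ≤ (d:ℝ) * d * CX2 := by positivity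
    linarith
  set c2 : ℝ := l * K with hc2def
  set c3 : ℝ := 2 * l * K with hc3def
  set c4 : ℝ := l * K + l * l * K with hc4def
  set c5 : ℝ := 2 * l * K + 3 * (l * l * K) with hc5def
  set c6 : ℝ := 2 * l * K + l * l * K + l * l * K * W with hc6def
  set c7 : ℝ := K + l * K + l * l * K * (W * (1 + d * CX)) with hc7def
  have hlK0 : 0 ≤ (l:ℝ) * K := mul_nonneg hl0 hK0
  have hllK0 : 0 ≤ (l:ℝ) * l * K := by positivity
  have hllKW0 : 0 ≤ (l:ℝ) * l * K * W := by
    exact mul_nonneg hllK0 hW0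
  have hllKWX0 : 0 ≤ (l:ℝ) * l * K * (W * (1 + d * CX)) := by
    have h1 : (0:ℝ) ≤ 1 + d * CX := by positivity
    exact mul_nonneg hllK0 (mul_nonneg hW0 h1)
  have hc20 : 0 ≤ c2 := hlK0
  have hc30 : 0 ≤ c3 := by rw [hc3def]; positivity
  have hc40 : 0 ≤ c4 := by rw [hc4def]; positivity
  have hc50 : 0 ≤ c5 := by rw [hc5def]; positivity
  have hc60 : 0 ≤ c6 := by rw [hc6def]; nlinarith
  have hc70 : 0 ≤ c7 := by rw [hc7def]; nlinarith
  refine ⟨8 * (K + c2 + c3 + c4 + c5 + c6 + c7), by linarith, ?_⟩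
  intro a b z ζ1 ζ2 r ρ hw
  set N := QNorm T κ z ζ1 ζ2 r ρ with hNdef
  -- basic facts about the interval
  have h0T : (0:ℝ) ∈ Icc (0:ℝ) T := ⟨le_refl _, hT.le⟩
  -- boundedness of ζ1, ζ2 on the interval
  obtain ⟨CB1, hCB10, hCB1⟩ := hw.hζ1
  obtain ⟨CB2, hCB20, hCB2⟩ := hw.hζ2
  have habsT : ∀ s ∈ Icc (0:ℝ) T, ∀ t ∈ Icc (0:ℝ) T, |t - s| ≤ T := by
    intro s hs t ht
    rw [abs_le]
    constructor
    · linarith [hs.2, ht.1]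
    · linarith [hs.1, ht.2]
  have hsupζ1ex : ∃ C, 0 ≤ C ∧ ∀ t ∈ Icc (0:ℝ) T, ‖ζ1 t‖ ≤ C := by
    refine ⟨‖ζ1 0‖ + CB1 * T ^ (κ:ℝ), by positivity, fun t ht => ?_⟩
    have h1 := hCB1 0 h0T t ht
    have h2 : |t - 0| ^ (κ:ℝ) ≤ T ^ (κ:ℝ) :=
      Real.rpow_le_rpow (abs_nonneg _) (habsT 0 h0T t ht) hκ0.le
    have h3 : ‖ζ1 t‖ ≤ ‖ζ1 0‖ + ‖ζ1 t - ζ1 0‖ := by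
      calc ‖ζ1 t‖ = ‖ζ1 0 + (ζ1 t - ζ1 0)‖ := by rw [add_sub_cancel]
        _ ≤ ‖ζ1 0‖ + ‖ζ1 t - ζ1 0‖ := norm_add_le _ _
    have h4 := mul_le_mul_of_nonneg_left h2 hCB10
    linarith
  have hsupζ2ex : ∃ C, 0 ≤ C ∧ ∀ t ∈ Icc (0:ℝ) T, ‖ζ2 t‖ ≤ C := by
    refine ⟨‖ζ2 0‖ + CB2 * T ^ (κ:ℝ), by positivity, fun t ht => ?_⟩
    have h1 := hCB2 0 h0T t ht
    have h2 : |t - 0| ^ (κ:ℝ) ≤ T ^ (κ:ℝ) :=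
      Real.rpow_le_rpow (abs_nonneg _) (habsT 0 h0T t ht) hκ0.le
    have h3 : ‖ζ2 t‖ ≤ ‖ζ2 0‖ + ‖ζ2 t - ζ2 0‖ := by
      calc ‖ζ2 t‖ = ‖ζ2 0 + (ζ2 t - ζ2 0)‖ := by rw [add_sub_cancel]
        _ ≤ ‖ζ2 0‖ + ‖ζ2 t - ζ2 0‖ := norm_add_le _ _
    have h4 := mul_le_mul_of_nonneg_left h2 hCB20
    linarith
  -- components of N
  have n1 := hnorm2_nonneg hw.hz
  have n2 := supnorm_nonneg hsupζ1ex
  have n3 := hnorm2_nonneg hw.hζ1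
  have n4 := supnorm_nonneg hsupζ2ex
  have n5 := hnorm2_nonneg hw.hζ2
  have n6 := hnorm2_nonneg hw.hρ
  have n7 := hnorm2_nonneg hw.hr
  have hNeq : N = HNorm2 0 T κ (fun s t => z t - z s)
      + SupNorm 0 T ζ1 + HNorm2 0 T κ (fun s t => ζ1 t - ζ1 s)
      + SupNorm 0 T ζ2 + HNorm2 0 T κ (fun s t => ζ2 t - ζ2 s)
      + HNorm2 0 T (2*κ) ρ + HNorm2 0 T (3*κ) r := rfl
  have hN0 : 0 ≤ N := by rw [hNeq]; linarith
  have h1N0 : (0:ℝ) ≤ 1 + N := by linarith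
  have hM0 : (0:ℝ) ≤ (1 + N) ^ 3 := pow_nonneg h1N0 3
  -- pointwise estimates from the Q-norm
  have hzn : ∀ s ∈ Icc (0:ℝ) T, ∀ t ∈ Icc (0:ℝ) T, ‖z t - z s‖ ≤ N * |t - s| ^ (κ:ℝ) := by
    intro s hs t ht
    have h := hnorm2_bound hκ0 hw.hz s hs t ht
    have h2 : HNorm2 0 T κ (fun s t => z t - z s) ≤ N := by rw [hNeq]; linarith
    calc ‖z t - z s‖ ≤ HNorm2 0 T κ (fun s t => z t - z s) * |t - s| ^ (κ:ℝ) := h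
      _ ≤ N * |t - s| ^ (κ:ℝ) :=
        mul_le_mul_of_nonneg_right h2 (Real.rpow_nonneg (abs_nonneg _) _)
  have hzb : ∀ s ∈ Icc (0:ℝ) T, ∀ t ∈ Icc (0:ℝ) T, ∀ i,
      |z t i - z s i| ≤ N * |t - s| ^ (κ:ℝ) := by
    intro s hs t ht i
    have h1 := pi1_abs (z t - z s) i
    rw [Pi.sub_apply] at h1
    exact le_trans h1 (hzn s hs t ht)
  have hζ1s : ∀ t ∈ Icc (0:ℝ) T, ∀ i j, |ζ1 t i j| ≤ N := by
    intro t ht i j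
    have h1 := pi2_abs (ζ1 t) i j
    have h2 := supnorm_bound hsupζ1ex t ht
    have h3 : SupNorm 0 T ζ1 ≤ N := by rw [hNeq]; linarith
    linarith
  have hζ2s : ∀ t ∈ Icc (0:ℝ) T, ∀ i j k, |ζ2 t i j k| ≤ N := by
    intro t ht i j k
    have h1 := pi3_abs (ζ2 t) i j k
    have h2 := supnorm_bound hsupζ2ex t ht
    have h3 : SupNorm 0 T ζ2 ≤ N := by rw [hNeq]; linarith
    linarith
  have hζ1d : ∀ s ∈ Icc (0:ℝ) T, ∀ t ∈ Icc (0:ℝ) T, ∀ i j,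
      |ζ1 t i j - ζ1 s i j| ≤ N * |t - s| ^ (κ:ℝ) := by
    intro s hs t ht i j
    have h1 := pi2_abs (ζ1 t - ζ1 s) i j
    rw [Pi.sub_apply, Pi.sub_apply] at h1
    have h := hnorm2_bound hκ0 hw.hζ1 s hs t ht
    have h2 : HNorm2 0 T κ (fun s t => ζ1 t - ζ1 s) ≤ N := by rw [hNeq]; linarith
    have h4 := mul_le_mul_of_nonneg_right h2 (Real.rpow_nonneg (abs_nonneg (t - s)) κ)
    calc |ζ1 t i j - ζ1 s i j| ≤ ‖ζ1 t - ζ1 s‖ := h1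
      _ ≤ HNorm2 0 T κ (fun s t => ζ1 t - ζ1 s) * |t - s| ^ (κ:ℝ) := h
      _ ≤ N * |t - s| ^ (κ:ℝ) := h4
  have hζ2d : ∀ s ∈ Icc (0:ℝ) T, ∀ t ∈ Icc (0:ℝ) T, ∀ i j k,
      |ζ2 t i j k - ζ2 s i j k| ≤ N * |t - s| ^ (κ:ℝ) := by
    intro s hs t ht i j k
    have h1 := pi3_abs (ζ2 t - ζ2 s) i j k
    rw [Pi.sub_apply, Pi.sub_apply, Pi.sub_apply] at h1
    have h := hnorm2_bound hκ0 hw.hζ2 s hs t ht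
    have h2 : HNorm2 0 T κ (fun s t => ζ2 t - ζ2 s) ≤ N := by rw [hNeq]; linarith
    have h4 := mul_le_mul_of_nonneg_right h2 (Real.rpow_nonneg (abs_nonneg (t - s)) κ)
    calc |ζ2 t i j k - ζ2 s i j k| ≤ ‖ζ2 t - ζ2 s‖ := h1
      _ ≤ HNorm2 0 T κ (fun s t => ζ2 t - ζ2 s) * |t - s| ^ (κ:ℝ) := h
      _ ≤ N * |t - s| ^ (κ:ℝ) := h4
  have hρb : ∀ s ∈ Icc (0:ℝ) T, ∀ t ∈ Icc (0:ℝ) T, ∀ i j,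
      |ρ s t i j| ≤ N * |t - s| ^ (2*κ) := by
    intro s hs t ht i j
    have h1 := pi2_abs (ρ s t) i j
    have h := hnorm2_bound (by linarith) hw.hρ s hs t ht
    have h2 : HNorm2 0 T (2*κ) ρ ≤ N := by rw [hNeq]; linarith
    have h4 := mul_le_mul_of_nonneg_right h2 (Real.rpow_nonneg (abs_nonneg (t - s)) (2*κ))
    calc |ρ s t i j| ≤ ‖ρ s t‖ := h1
      _ ≤ HNorm2 0 T (2*κ) ρ * |t - s| ^ (2*κ) := h
      _ ≤ N * |t - s| ^ (2*κ) := h4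
  have hrb : ∀ s ∈ Icc (0:ℝ) T, ∀ t ∈ Icc (0:ℝ) T, ∀ i,
      |r s t i| ≤ N * |t - s| ^ (3*κ) := by
    intro s hs t ht i
    have h1 := pi1_abs (r s t) i
    have h := hnorm2_bound (by linarith) hw.hr s hs t ht
    have h2 : HNorm2 0 T (3*κ) r ≤ N := by rw [hNeq]; linarith
    have h4 := mul_le_mul_of_nonneg_right h2 (Real.rpow_nonneg (abs_nonneg (t - s)) (3*κ))
    calc |r s t i| ≤ ‖r s t‖ := h1
      _ ≤ HNorm2 0 T (3*κ) r * |t - s| ^ (3*κ) := h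
      _ ≤ N * |t - s| ^ (3*κ) := h4
  -- driver estimates at exponent κ
  have hxb : ∀ s ∈ Icc (0:ℝ) T, ∀ t ∈ Icc (0:ℝ) T, ∀ j,
      |x t j - x s j| ≤ CX * |t - s| ^ (κ:ℝ) := by
    intro s hs t ht j
    have h1 := pi1_abs (x t - x s) j
    rw [Pi.sub_apply] at h1
    have h := hCx s hs t ht
    have e : |t - s| ^ (γ:ℝ) = |t - s| ^ (γ - κ) * |t - s| ^ (κ:ℝ) :=
      rpow_split' _ (abs_nonneg _) (γ - κ) κ γ (by ring) hγ0.ne'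
    have h2 : |t - s| ^ (γ - κ) ≤ T ^ (γ - κ) :=
      Real.rpow_le_rpow (abs_nonneg _) (habsT s hs t ht) (by linarith)
    have h3 : Cx * |t - s| ^ (γ:ℝ) ≤ CX * |t - s| ^ (κ:ℝ) := by
      rw [e, hCXdef]
      have := mul_le_mul_of_nonneg_right h2 (Real.rpow_nonneg (abs_nonneg (t-s)) κ)
      calc Cx * (|t - s| ^ (γ - κ) * |t - s| ^ (κ:ℝ))
          ≤ Cx * (T ^ (γ - κ) * |t - s| ^ (κ:ℝ)) := mul_le_mul_of_nonneg_left this hCx0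
        _ = Cx * T ^ (γ - κ) * |t - s| ^ (κ:ℝ) := by ring
    calc |x t j - x s j| ≤ ‖x t - x s‖ := h1
      _ ≤ Cx * |t - s| ^ (γ:ℝ) := h
      _ ≤ CX * |t - s| ^ (κ:ℝ) := h3
  have hx2b : ∀ s ∈ Icc (0:ℝ) T, ∀ t ∈ Icc (0:ℝ) T, ∀ j k,
      |x2 s t j k| ≤ CX2 * |t - s| ^ (2*κ) := by
    intro s hs t ht j k
    have h1 := pi2_abs (x2 s t) j k
    have h := hCx2 s hs t ht
    have e : |t - s| ^ (2*γ) = |t - s| ^ (2*γ - 2*κ) * |t - s| ^ (2*κ) :=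
      rpow_split' _ (abs_nonneg _) (2*γ - 2*κ) (2*κ) (2*γ) (by ring)
        (by positivity : (0:ℝ) < 2*γ).ne'
    have h2 : |t - s| ^ (2*γ - 2*κ) ≤ T ^ (2*γ - 2*κ) :=
      Real.rpow_le_rpow (abs_nonneg _) (habsT s hs t ht) (by linarith)
    have h3 : Cx2 * |t - s| ^ (2*γ) ≤ CX2 * |t - s| ^ (2*κ) := by
      rw [e, hCX2def]
      have := mul_le_mul_of_nonneg_right h2 (Real.rpow_nonneg (abs_nonneg (t-s)) (2*κ))
      calc Cx2 * (|t - s| ^ (2*γ - 2*κ) * |t - s| ^ (2*κ))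
          ≤ Cx2 * (T ^ (2*γ - 2*κ) * |t - s| ^ (2*κ)) := mul_le_mul_of_nonneg_left this hCx20
        _ = Cx2 * T ^ (2*γ - 2*κ) * |t - s| ^ (2*κ) := by ring
    calc |x2 s t j k| ≤ ‖x2 s t‖ := h1
      _ ≤ Cx2 * |t - s| ^ (2*γ) := h
      _ ≤ CX2 * |t - s| ^ (2*κ) := h3
  -- ── the seven scalar bounds ──
  have hb1 : ∀ s ∈ Icc (0:ℝ) T, ∀ t ∈ Icc (0:ℝ) T,
      |φ (z t) - φ (z s)| ≤ K * (1+N)^3 * |t - s| ^ κ := by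
    intro s hs t ht
    have hPκ : (0:ℝ) ≤ |t - s| ^ κ := Real.rpow_nonneg (abs_nonneg _) _
    calc |φ (z t) - φ (z s)| ≤ K * ‖z t - z s‖ := hφlip (z s) (z t)
      _ ≤ K * (N * |t - s| ^ κ) := mul_le_mul_of_nonneg_left (hzn s hs t ht) hK0
      _ = (K * N) * |t - s| ^ κ := by ring
      _ ≤ K * (1+N)^3 * |t - s| ^ κ := by
          refine mul_le_mul_of_nonneg_right ?_ hPκ
          have := mul_le_mul_of_nonneg_left (cube_ge1 hN0) hK0
          linarith
  have hb2 : ∀ t ∈ Icc (0:ℝ) T, ∀ j, |∑ i, pd φ (z t) i * ζ1 t i j| ≤ c2 * (1+N)^3 := by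
    intro t ht j
    calc |∑ i, pd φ (z t) i * ζ1 t i j| ≤ l * (K * N) :=
          sum_abs_le _ fun i => mul_bound (hpdK (z t) i) (hζ1s t ht i j)
      _ ≤ c2 * (1+N)^3 := by
          have := mul_le_mul_of_nonneg_left (cube_ge1 hN0) hlK0
          rw [hc2def]; linarith
  have hb3 : ∀ s ∈ Icc (0:ℝ) T, ∀ t ∈ Icc (0:ℝ) T, ∀ j,
      |(∑ i, pd φ (z t) i * ζ1 t i j) - ∑ i, pd φ (z s) i * ζ1 s i j|
        ≤ c3 * (1+N)^3 * |t - s| ^ κ := by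
    intro s hs t ht j
    have hPκ : (0:ℝ) ≤ |t - s| ^ κ := Real.rpow_nonneg (abs_nonneg _) _
    have hpdl : ∀ i, |pd φ (z t) i - pd φ (z s) i| ≤ K * (N * |t - s| ^ κ) := fun i =>
      le_trans (hpdlip (z s) (z t) i) (mul_le_mul_of_nonneg_left (hzn s hs t ht) hK0)
    have hid : (∑ i, pd φ (z t) i * ζ1 t i j) - ∑ i, pd φ (z s) i * ζ1 s i j
        = ∑ i, ((pd φ (z t) i - pd φ (z s) i) * ζ1 t i j
            + pd φ (z s) i * (ζ1 t i j - ζ1 s i j)) := by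
      rw [← Finset.sum_sub_distrib]
      exact Finset.sum_congr rfl fun i _ => by ring
    rw [hid]
    refine le_trans (sum_abs_le _ fun i => le_trans (abs_add_le _ _) (add_le_add
      (mul_bound (hpdl i) (hζ1s t ht i j))
      (mul_bound (hpdK (z s) i) (hζ1d s hs t ht i j)))) ?_
    have heq : (l:ℝ) * ((K * (N * |t - s| ^ κ)) * N + K * (N * |t - s| ^ κ))
        = ((l:ℝ) * (K * (N * N)) + (l:ℝ) * (K * N)) * |t - s| ^ κ := by ring
    rw [heq]
    refine mul_le_mul_of_nonneg_right ?_ hPκ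
    have h1 := mul_le_mul_of_nonneg_left (cube_ge2 hN0) hlK0
    have h2 := mul_le_mul_of_nonneg_left (cube_ge1 hN0) hlK0
    rw [hc3def]; linarith
  have hb4 : ∀ t ∈ Icc (0:ℝ) T, ∀ j k,
      |(∑ i, pd φ (z t) i * ζ2 t i j k)
        + ∑ i₁, ∑ i₂, pd2 φ (z t) i₁ i₂ * ζ1 t i₁ j * ζ1 t i₂ k| ≤ c4 * (1+N)^3 := by
    intro t ht j k
    have h1 : |∑ i, pd φ (z t) i * ζ2 t i j k| ≤ l * (K * N) :=
      sum_abs_le _ fun i => mul_bound (hpdK _ _) (hζ2s t ht i j k)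
    have h2 : |∑ i₁, ∑ i₂, pd2 φ (z t) i₁ i₂ * ζ1 t i₁ j * ζ1 t i₂ k|
        ≤ l * ((l:ℝ) * ((K * N) * N)) :=
      sum_abs_le _ fun i₁ => sum_abs_le _ fun i₂ =>
        mul_bound (mul_bound (hpd2K _ _ _) (hζ1s t ht i₁ j)) (hζ1s t ht i₂ k)
    refine le_trans (abs_add_le _ _) (le_trans (add_le_add h1 h2) ?_)
    have h3 := mul_le_mul_of_nonneg_left (cube_ge1 hN0) hlK0
    have h4 := mul_le_mul_of_nonneg_left (cube_ge2 hN0) hllK0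
    rw [hc4def]; linarith
  have hb5 : ∀ s ∈ Icc (0:ℝ) T, ∀ t ∈ Icc (0:ℝ) T, ∀ j k,
      |((∑ i, pd φ (z t) i * ζ2 t i j k)
          + ∑ i₁, ∑ i₂, pd2 φ (z t) i₁ i₂ * ζ1 t i₁ j * ζ1 t i₂ k)
        - ((∑ i, pd φ (z s) i * ζ2 s i j k)
          + ∑ i₁, ∑ i₂, pd2 φ (z s) i₁ i₂ * ζ1 s i₁ j * ζ1 s i₂ k)|
        ≤ c5 * (1+N)^3 * |t - s| ^ κ := by
    intro s hs t ht j k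
    have hPκ : (0:ℝ) ≤ |t - s| ^ κ := Real.rpow_nonneg (abs_nonneg _) _
    have hpdl : ∀ i, |pd φ (z t) i - pd φ (z s) i| ≤ K * (N * |t - s| ^ κ) := fun i =>
      le_trans (hpdlip (z s) (z t) i) (mul_le_mul_of_nonneg_left (hzn s hs t ht) hK0)
    have hpd2l : ∀ i₁ i₂, |pd2 φ (z t) i₁ i₂ - pd2 φ (z s) i₁ i₂| ≤ K * (N * |t - s| ^ κ) :=
      fun i₁ i₂ =>
      le_trans (hpd2lip (z s) (z t) i₁ i₂) (mul_le_mul_of_nonneg_left (hzn s hs t ht) hK0)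
    have hidA : (∑ i, pd φ (z t) i * ζ2 t i j k) - ∑ i, pd φ (z s) i * ζ2 s i j k
        = ∑ i, ((pd φ (z t) i - pd φ (z s) i) * ζ2 t i j k
            + pd φ (z s) i * (ζ2 t i j k - ζ2 s i j k)) := by
      rw [← Finset.sum_sub_distrib]
      exact Finset.sum_congr rfl fun i _ => by ring
    have hidB : (∑ i₁, ∑ i₂, pd2 φ (z t) i₁ i₂ * ζ1 t i₁ j * ζ1 t i₂ k)
          - ∑ i₁, ∑ i₂, pd2 φ (z s) i₁ i₂ * ζ1 s i₁ j * ζ1 s i₂ k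
        = ∑ i₁, ∑ i₂, ((pd2 φ (z t) i₁ i₂ - pd2 φ (z s) i₁ i₂) * ζ1 t i₁ j * ζ1 t i₂ k
            + pd2 φ (z s) i₁ i₂ * (ζ1 t i₁ j - ζ1 s i₁ j) * ζ1 t i₂ k
            + pd2 φ (z s) i₁ i₂ * ζ1 s i₁ j * (ζ1 t i₂ k - ζ1 s i₂ k)) := by
      rw [← Finset.sum_sub_distrib]
      refine Finset.sum_congr rfl fun i₁ _ => ?_
      rw [← Finset.sum_sub_distrib]
      exact Finset.sum_congr rfl fun i₂ _ => by ring
    have hsplit : ((∑ i, pd φ (z t) i * ζ2 t i j k)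
          + ∑ i₁, ∑ i₂, pd2 φ (z t) i₁ i₂ * ζ1 t i₁ j * ζ1 t i₂ k)
        - ((∑ i, pd φ (z s) i * ζ2 s i j k)
          + ∑ i₁, ∑ i₂, pd2 φ (z s) i₁ i₂ * ζ1 s i₁ j * ζ1 s i₂ k)
        = ((∑ i, pd φ (z t) i * ζ2 t i j k) - ∑ i, pd φ (z s) i * ζ2 s i j k)
          + ((∑ i₁, ∑ i₂, pd2 φ (z t) i₁ i₂ * ζ1 t i₁ j * ζ1 t i₂ k)
            - ∑ i₁, ∑ i₂, pd2 φ (z s) i₁ i₂ * ζ1 s i₁ j * ζ1 s i₂ k) := by ring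
    rw [hsplit, hidA, hidB]
    have hA : |∑ i, ((pd φ (z t) i - pd φ (z s) i) * ζ2 t i j k
          + pd φ (z s) i * (ζ2 t i j k - ζ2 s i j k))|
        ≤ l * ((K * (N * |t - s| ^ κ)) * N + K * (N * |t - s| ^ κ)) :=
      sum_abs_le _ fun i => le_trans (abs_add_le _ _) (add_le_add
        (mul_bound (hpdl i) (hζ2s t ht i j k))
        (mul_bound (hpdK _ _) (hζ2d s hs t ht i j k)))
    have hB : |∑ i₁, ∑ i₂, ((pd2 φ (z t) i₁ i₂ - pd2 φ (z s) i₁ i₂) * ζ1 t i₁ j * ζ1 t i₂ k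
          + pd2 φ (z s) i₁ i₂ * (ζ1 t i₁ j - ζ1 s i₁ j) * ζ1 t i₂ k
          + pd2 φ (z s) i₁ i₂ * ζ1 s i₁ j * (ζ1 t i₂ k - ζ1 s i₂ k))|
        ≤ l * ((l:ℝ) * (((K * (N * |t - s| ^ κ)) * N) * N + (K * (N * |t - s| ^ κ)) * N
            + (K * N) * (N * |t - s| ^ κ))) :=
      sum_abs_le _ fun i₁ => sum_abs_le _ fun i₂ => le_trans (abs_add3 _ _ _)
        (add_le_add (add_le_add
          (mul_bound (mul_bound (hpd2l i₁ i₂) (hζ1s t ht i₁ j)) (hζ1s t ht i₂ k))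
          (mul_bound (mul_bound (hpd2K _ _ _) (hζ1d s hs t ht i₁ j)) (hζ1s t ht i₂ k)))
          (mul_bound (mul_bound (hpd2K _ _ _) (hζ1s s hs i₁ j)) (hζ1d s hs t ht i₂ k)))
    refine le_trans (abs_add_le _ _) (le_trans (add_le_add hA hB) ?_)
    have heq : (l:ℝ) * ((K * (N * |t - s| ^ κ)) * N + K * (N * |t - s| ^ κ))
        + (l:ℝ) * ((l:ℝ) * (((K * (N * |t - s| ^ κ)) * N) * N + (K * (N * |t - s| ^ κ)) * N
          + (K * N) * (N * |t - s| ^ κ)))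
        = ((l:ℝ) * (K * (N * N)) + (l:ℝ) * (K * N)
          + (l:ℝ) * (l:ℝ) * (K * (N * N * N)) + 2 * ((l:ℝ) * (l:ℝ) * (K * (N * N))))
          * |t - s| ^ κ := by ring
    rw [heq]
    refine mul_le_mul_of_nonneg_right ?_ hPκ
    have h1 := mul_le_mul_of_nonneg_left (cube_ge2 hN0) hlK0
    have h2 := mul_le_mul_of_nonneg_left (cube_ge1 hN0) hlK0
    have h3 := mul_le_mul_of_nonneg_left (cube_ge3 hN0) hllK0
    have h4 := mul_le_mul_of_nonneg_left (cube_ge2 hN0) hllK0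
    rw [hc5def]; linarith
  -- ρ̂ bound
  have hb6 : ∀ s ∈ Icc (0:ℝ) T, ∀ t ∈ Icc (0:ℝ) T, ∀ j,
      |((∑ i, pd φ (z t) i * ζ1 t i j) - ∑ i, pd φ (z s) i * ζ1 s i j)
        - ∑ k, ((∑ i, pd φ (z s) i * ζ2 s i j k)
            + ∑ i₁, ∑ i₂, pd2 φ (z s) i₁ i₂ * ζ1 s i₁ j * ζ1 s i₂ k) * (x t k - x s k)|
        ≤ c6 * (1+N)^3 * |t - s| ^ (2*κ) := by
    intro s hs t ht j
    have hΔ0 : (0:ℝ) ≤ |t - s| := abs_nonneg _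
    have hPκ : (0:ℝ) ≤ |t - s| ^ κ := Real.rpow_nonneg hΔ0 _
    have hP2 : (0:ℝ) ≤ |t - s| ^ (2*κ) := Real.rpow_nonneg hΔ0 _
    have e2 : |t - s| ^ (2*κ) = |t - s| ^ κ * |t - s| ^ κ :=
      rpow_split' _ hΔ0 κ κ (2*κ) (by ring) (by positivity)
    have e3 : |t - s| ^ (3*κ) = |t - s| ^ (2*κ) * |t - s| ^ κ :=
      rpow_split' _ hΔ0 (2*κ) κ (3*κ) (by ring) (by positivity)
    have eκT : |t - s| ^ κ ≤ T ^ (κ:ℝ) :=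
      Real.rpow_le_rpow hΔ0 (habsT s hs t ht) hκ0.le
    have hQb : ∀ i : Fin l, |z t i - z s i - ∑ k, ζ1 s i k * (x t k - x s k)|
        ≤ W * N * |t - s| ^ (2*κ) := by
      intro i
      have hdz := hw.decomp s hs t ht i
      have hrw : z t i - z s i - ∑ k, ζ1 s i k * (x t k - x s k)
          = (∑ j', ∑ k', ζ2 s i j' k' * x2 s t k' j') + r s t i := by
        rw [hdz]; ring
      rw [hrw]
      have h1 : |∑ j', ∑ k', ζ2 s i j' k' * x2 s t k' j'|
          ≤ d * ((d:ℝ) * (N * (CX2 * |t - s| ^ (2*κ)))) :=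
        sum_abs_le _ fun j' => sum_abs_le _ fun k' =>
          mul_bound (hζ2s s hs i j' k') (hx2b s hs t ht k' j')
      have h2 := hrb s hs t ht i
      refine le_trans (abs_add_le _ _) (le_trans (add_le_add h1 h2) ?_)
      have h3 : N * |t - s| ^ (3*κ) ≤ N * (T ^ (κ:ℝ) * |t - s| ^ (2*κ)) := by
        rw [e3]
        have h4 := mul_le_mul_of_nonneg_left eκT hP2
        have h5 := mul_le_mul_of_nonneg_left h4 hN0
        calc N * (|t - s| ^ (2*κ) * |t - s| ^ κ)
            ≤ N * (|t - s| ^ (2*κ) * T ^ (κ:ℝ)) := h5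
          _ = N * (T ^ (κ:ℝ) * |t - s| ^ (2*κ)) := by ring
      have h6 : (d:ℝ) * ((d:ℝ) * (N * (CX2 * |t - s| ^ (2*κ))))
            + N * (T ^ (κ:ℝ) * |t - s| ^ (2*κ)) = W * N * |t - s| ^ (2*κ) := by
        rw [hWdef]; ring
      linarith
    have hA : ∀ i : Fin l, |pd φ (z t) i - pd φ (z s) i
        - ∑ i₂, pd2 φ (z s) i i₂ * (z t i₂ - z s i₂)| ≤ K * (N * N * |t - s| ^ (2*κ)) := by
      intro i
      calc |pd φ (z t) i - pd φ (z s) i - ∑ i₂, pd2 φ (z s) i i₂ * (z t i₂ - z s i₂)|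
          ≤ K * ‖z t - z s‖ ^ 2 := htay2 (z s) (z t) i
        _ ≤ K * (N * |t - s| ^ κ) ^ 2 :=
            mul_le_mul_of_nonneg_left
              (pow_le_pow_left₀ (norm_nonneg _) (hzn s hs t ht) 2) hK0
        _ = K * (N * N * (|t - s| ^ κ * |t - s| ^ κ)) := by ring
        _ = K * (N * N * |t - s| ^ (2*κ)) := by rw [← e2]
    have hS3 : ∀ i : Fin l, |∑ i₂, pd2 φ (z s) i i₂ * (z t i₂ - z s i₂)|
        ≤ l * (K * (N * |t - s| ^ κ)) := fun i =>
      sum_abs_le _ fun i₂ => mul_bound (hpd2K _ _ _) (hzb s hs t ht i₂)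
    have hSQ : ∀ i : Fin l,
        |∑ i₂, pd2 φ (z s) i i₂ * (z t i₂ - z s i₂ - ∑ k, ζ1 s i₂ k * (x t k - x s k))|
        ≤ l * (K * (W * N * |t - s| ^ (2*κ))) := fun i =>
      sum_abs_le _ fun i₂ => mul_bound (hpd2K _ _ _) (hQb i₂)
    have hPρ : ∀ i : Fin l, ζ1 t i j - ζ1 s i j - ∑ k, ζ2 s i j k * (x t k - x s k)
        = ρ s t i j := by
      intro i
      have := hw.decompζ s hs t ht i j
      linarith
    have hsplitQ : ∀ i : Fin l,
        (∑ i₂, pd2 φ (z s) i i₂ * (z t i₂ - z s i₂ - ∑ k, ζ1 s i₂ k * (x t k - x s k)))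
        = (∑ i₂, pd2 φ (z s) i i₂ * (z t i₂ - z s i₂))
          - ∑ i₂, pd2 φ (z s) i i₂ * (∑ k, ζ1 s i₂ k * (x t k - x s k)) := by
      intro i
      rw [← Finset.sum_sub_distrib]
      exact Finset.sum_congr rfl fun i₂ _ => by ring
    have eA6 : (∑ k, ((∑ i, pd φ (z s) i * ζ2 s i j k)
          + ∑ i₁, ∑ i₂, pd2 φ (z s) i₁ i₂ * ζ1 s i₁ j * ζ1 s i₂ k) * (x t k - x s k))
        = ∑ i, (pd φ (z s) i * (∑ k, ζ2 s i j k * (x t k - x s k))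
          + (∑ i₂, pd2 φ (z s) i i₂ * (∑ k, ζ1 s i₂ k * (x t k - x s k))) * ζ1 s i j) := by
      simp_rw [add_mul, Finset.sum_mul, Finset.sum_add_distrib]
      congr 1
      · rw [Finset.sum_comm]
        refine Finset.sum_congr rfl fun i _ => ?_
        rw [Finset.mul_sum]
        exact Finset.sum_congr rfl fun k _ => by ring
      · rw [Finset.sum_comm]
        refine Finset.sum_congr rfl fun i₁ _ => ?_
        rw [Finset.sum_comm]
        refine Finset.sum_congr rfl fun i₂ _ => ?_
        rw [Finset.mul_sum, Finset.sum_mul]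
        exact Finset.sum_congr rfl fun k _ => by ring
    have hid6 : ((∑ i, pd φ (z t) i * ζ1 t i j) - ∑ i, pd φ (z s) i * ζ1 s i j)
          - ∑ k, ((∑ i, pd φ (z s) i * ζ2 s i j k)
              + ∑ i₁, ∑ i₂, pd2 φ (z s) i₁ i₂ * ζ1 s i₁ j * ζ1 s i₂ k) * (x t k - x s k)
        = ∑ i, ((pd φ (z t) i - pd φ (z s) i
              - ∑ i₂, pd2 φ (z s) i i₂ * (z t i₂ - z s i₂)) * ζ1 t i j
            + (∑ i₂, pd2 φ (z s) i i₂ * (z t i₂ - z s i₂)) * (ζ1 t i j - ζ1 s i j)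
            + (∑ i₂, pd2 φ (z s) i i₂
                * (z t i₂ - z s i₂ - ∑ k, ζ1 s i₂ k * (x t k - x s k))) * ζ1 s i j
            + pd φ (z s) i * (ζ1 t i j - ζ1 s i j
                - ∑ k, ζ2 s i j k * (x t k - x s k))) := by
      rw [eA6, ← Finset.sum_sub_distrib, ← Finset.sum_sub_distrib]
      refine Finset.sum_congr rfl fun i _ => ?_
      rw [hsplitQ i]
      ring
    rw [hid6]
    refine le_trans (sum_abs_le _ fun i => le_trans (abs_add4 _ _ _ _)
      (add_le_add (add_le_add (add_le_add
        (mul_bound (hA i) (hζ1s t ht i j))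
        (mul_bound (hS3 i) (hζ1d s hs t ht i j)))
        (mul_bound (hSQ i) (hζ1s s hs i j)))
        (mul_bound (hpdK _ _)
          (le_of_eq_of_le (congrArg abs (hPρ i)) (hρb s hs t ht i j))))) ?_
    have heq : (l:ℝ) * ((K * (N * N * |t - s| ^ (2*κ))) * N
          + ((l:ℝ) * (K * (N * |t - s| ^ κ))) * (N * |t - s| ^ κ)
          + ((l:ℝ) * (K * (W * N * |t - s| ^ (2*κ)))) * N
          + K * (N * |t - s| ^ (2*κ)))
        = ((l:ℝ) * (K * (N * N * N)) + (l:ℝ) * (l:ℝ) * (K * (N * N))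
          + (l:ℝ) * (l:ℝ) * (K * (W * (N * N))) + (l:ℝ) * (K * N)) * |t - s| ^ (2*κ) := by
      rw [e2]; ring
    rw [heq]
    refine mul_le_mul_of_nonneg_right ?_ hP2
    have g1 := mul_le_mul_of_nonneg_left (cube_ge3 hN0) hlK0
    have g2 := mul_le_mul_of_nonneg_left (cube_ge2 hN0) hllK0
    have g3 := mul_le_mul_of_nonneg_left (cube_ge2 hN0) hllKW0
    have g4 := mul_le_mul_of_nonneg_left (cube_ge1 hN0) hlK0
    rw [hc6def]; linarith
  -- r̂ bound
  have hb7 : ∀ s ∈ Icc (0:ℝ) T, ∀ t ∈ Icc (0:ℝ) T,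
      |(φ (z t) - φ (z s)) - (∑ j, (∑ i, pd φ (z s) i * ζ1 s i j) * (x t j - x s j))
        - ∑ j, ∑ k, ((∑ i, pd φ (z s) i * ζ2 s i j k)
            + ∑ i₁, ∑ i₂, pd2 φ (z s) i₁ i₂ * ζ1 s i₁ j * ζ1 s i₂ k) * x2 s t k j|
        ≤ c7 * (1+N)^3 * |t - s| ^ (3*κ) := by
    intro s hs t ht
    have hΔ0 : (0:ℝ) ≤ |t - s| := abs_nonneg _
    have hPκ : (0:ℝ) ≤ |t - s| ^ κ := Real.rpow_nonneg hΔ0 _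
    have hP2 : (0:ℝ) ≤ |t - s| ^ (2*κ) := Real.rpow_nonneg hΔ0 _
    have hP3 : (0:ℝ) ≤ |t - s| ^ (3*κ) := Real.rpow_nonneg hΔ0 _
    have e2 : |t - s| ^ (2*κ) = |t - s| ^ κ * |t - s| ^ κ :=
      rpow_split' _ hΔ0 κ κ (2*κ) (by ring) (by positivity)
    have e3 : |t - s| ^ (3*κ) = |t - s| ^ (2*κ) * |t - s| ^ κ :=
      rpow_split' _ hΔ0 (2*κ) κ (3*κ) (by ring) (by positivity)
    have eκT : |t - s| ^ κ ≤ T ^ (κ:ℝ) :=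
      Real.rpow_le_rpow hΔ0 (habsT s hs t ht) hκ0.le
    have haa : ∀ i : Fin l, |∑ j, ζ1 s i j * (x t j - x s j)|
        ≤ d * (N * (CX * |t - s| ^ κ)) := fun i =>
      sum_abs_le _ fun j => mul_bound (hζ1s s hs i j) (hxb s hs t ht j)
    have hQb : ∀ i : Fin l, |z t i - z s i - ∑ j, ζ1 s i j * (x t j - x s j)|
        ≤ W * N * |t - s| ^ (2*κ) := by
      intro i
      have hdz := hw.decomp s hs t ht i
      have hrw : z t i - z s i - ∑ j, ζ1 s i j * (x t j - x s j)
          = (∑ j', ∑ k', ζ2 s i j' k' * x2 s t k' j') + r s t i := by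
        rw [hdz]; ring
      rw [hrw]
      have h1 : |∑ j', ∑ k', ζ2 s i j' k' * x2 s t k' j'|
          ≤ d * ((d:ℝ) * (N * (CX2 * |t - s| ^ (2*κ)))) :=
        sum_abs_le _ fun j' => sum_abs_le _ fun k' =>
          mul_bound (hζ2s s hs i j' k') (hx2b s hs t ht k' j')
      have h2 := hrb s hs t ht i
      refine le_trans (abs_add_le _ _) (le_trans (add_le_add h1 h2) ?_)
      have h3 : N * |t - s| ^ (3*κ) ≤ N * (T ^ (κ:ℝ) * |t - s| ^ (2*κ)) := by
        rw [e3]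
        have h4 := mul_le_mul_of_nonneg_left eκT hP2
        have h5 := mul_le_mul_of_nonneg_left h4 hN0
        calc N * (|t - s| ^ (2*κ) * |t - s| ^ κ)
            ≤ N * (|t - s| ^ (2*κ) * T ^ (κ:ℝ)) := h5
          _ = N * (T ^ (κ:ℝ) * |t - s| ^ (2*κ)) := by ring
      have h6 : (d:ℝ) * ((d:ℝ) * (N * (CX2 * |t - s| ^ (2*κ))))
            + N * (T ^ (κ:ℝ) * |t - s| ^ (2*κ)) = W * N * |t - s| ^ (2*κ) := by
        rw [hWdef]; ring
      linarith
    have hv : ∀ i : Fin l, z t i - z s i - (∑ j, ζ1 s i j * (x t j - x s j))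
        - (∑ j, ∑ k, ζ2 s i j k * x2 s t k j) = r s t i := by
      intro i
      have := hw.decomp s hs t ht i
      linarith
    have h1 : (∑ j, (∑ i, pd φ (z s) i * ζ1 s i j) * (x t j - x s j))
        = ∑ i, pd φ (z s) i * (∑ j, ζ1 s i j * (x t j - x s j)) := by
      simp_rw [Finset.sum_mul]
      rw [Finset.sum_comm]
      refine Finset.sum_congr rfl fun i _ => ?_
      rw [Finset.mul_sum]
      exact Finset.sum_congr rfl fun j _ => by ring
    have h2 : (∑ j, ∑ k, ((∑ i, pd φ (z s) i * ζ2 s i j k)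
          + ∑ i₁, ∑ i₂, pd2 φ (z s) i₁ i₂ * ζ1 s i₁ j * ζ1 s i₂ k) * x2 s t k j)
        = (∑ i, pd φ (z s) i * (∑ j, ∑ k, ζ2 s i j k * x2 s t k j))
          + ∑ i₁, ∑ i₂, ∑ j, ∑ k,
              pd2 φ (z s) i₁ i₂ * ζ1 s i₁ j * ζ1 s i₂ k * x2 s t k j := by
      simp_rw [add_mul, Finset.sum_mul, Finset.sum_add_distrib]
      congr 1
      · calc (∑ j, ∑ k, ∑ i, pd φ (z s) i * ζ2 s i j k * x2 s t k j)
            = ∑ j, ∑ i, ∑ k, pd φ (z s) i * ζ2 s i j k * x2 s t k j :=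
              Finset.sum_congr rfl fun j _ => Finset.sum_comm
          _ = ∑ i, ∑ j, ∑ k, pd φ (z s) i * ζ2 s i j k * x2 s t k j := Finset.sum_comm
          _ = ∑ i, pd φ (z s) i * (∑ j, ∑ k, ζ2 s i j k * x2 s t k j) := by
              refine Finset.sum_congr rfl fun i _ => ?_
              rw [Finset.mul_sum]
              refine Finset.sum_congr rfl fun j _ => ?_
              rw [Finset.mul_sum]
              exact Finset.sum_congr rfl fun k _ => by ring
      · calc (∑ j, ∑ k, ∑ i₁, ∑ i₂,
                pd2 φ (z s) i₁ i₂ * ζ1 s i₁ j * ζ1 s i₂ k * x2 s t k j)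
            = ∑ j, ∑ i₁, ∑ k, ∑ i₂,
                pd2 φ (z s) i₁ i₂ * ζ1 s i₁ j * ζ1 s i₂ k * x2 s t k j :=
              Finset.sum_congr rfl fun j _ => Finset.sum_comm
          _ = ∑ i₁, ∑ j, ∑ k, ∑ i₂,
                pd2 φ (z s) i₁ i₂ * ζ1 s i₁ j * ζ1 s i₂ k * x2 s t k j := Finset.sum_comm
          _ = ∑ i₁, ∑ j, ∑ i₂, ∑ k,
                pd2 φ (z s) i₁ i₂ * ζ1 s i₁ j * ζ1 s i₂ k * x2 s t k j :=
              Finset.sum_congr rfl fun i₁ _ => Finset.sum_congr rfl fun j _ =>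
                Finset.sum_comm
          _ = ∑ i₁, ∑ i₂, ∑ j, ∑ k,
                pd2 φ (z s) i₁ i₂ * ζ1 s i₁ j * ζ1 s i₂ k * x2 s t k j :=
              Finset.sum_congr rfl fun i₁ _ => Finset.sum_comm
    have h3 : (∑ i, pd φ (z s) i * r s t i)
        = (∑ i, pd φ (z s) i * (z t i - z s i))
          - (∑ i, pd φ (z s) i * (∑ j, ζ1 s i j * (x t j - x s j)))
          - ∑ i, pd φ (z s) i * (∑ j, ∑ k, ζ2 s i j k * x2 s t k j) := by
      rw [← Finset.sum_sub_distrib, ← Finset.sum_sub_distrib]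
      refine Finset.sum_congr rfl fun i _ => ?_
      rw [← hv i]
      ring
    have hTT : (∑ i₁, ∑ i₂, pd2 φ (z s) i₁ i₂ * (z t i₁ - z s i₁) * (z t i₂ - z s i₂))
        = (∑ i₁, ∑ i₂, pd2 φ (z s) i₁ i₂
            * ((z t i₁ - z s i₁ - ∑ j, ζ1 s i₁ j * (x t j - x s j)) * (z t i₂ - z s i₂)
              + (∑ j, ζ1 s i₁ j * (x t j - x s j))
                * (z t i₂ - z s i₂ - ∑ j, ζ1 s i₂ j * (x t j - x s j))))
          + ∑ i₁, ∑ i₂, pd2 φ (z s) i₁ i₂ * (∑ j, ζ1 s i₁ j * (x t j - x s j))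
              * (∑ j, ζ1 s i₂ j * (x t j - x s j)) := by
      rw [← Finset.sum_add_distrib]
      refine Finset.sum_congr rfl fun i₁ _ => ?_
      rw [← Finset.sum_add_distrib]
      exact Finset.sum_congr rfl fun i₂ _ => by ring
    have hQ4sw : (∑ i₁, ∑ i₂, pd2 φ (z s) i₁ i₂ * (∑ j, ζ1 s i₁ j * (x t j - x s j))
            * (∑ j, ζ1 s i₂ j * (x t j - x s j)))
        = 2 * ∑ i₁, ∑ i₂, ∑ j, ∑ k,
            pd2 φ (z s) i₁ i₂ * ζ1 s i₁ j * ζ1 s i₂ k * x2 s t k j := by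
      have hstep1 : (∑ i₁, ∑ i₂, pd2 φ (z s) i₁ i₂ * (∑ j, ζ1 s i₁ j * (x t j - x s j))
              * (∑ j, ζ1 s i₂ j * (x t j - x s j)))
          = ∑ i₁, ∑ i₂, ∑ j, ∑ k, pd2 φ (z s) i₁ i₂ * ζ1 s i₁ j * ζ1 s i₂ k
              * (x2 s t j k + x2 s t k j) := by
        refine Finset.sum_congr rfl fun i₁ _ => Finset.sum_congr rfl fun i₂ _ => ?_
        rw [mul_assoc, Finset.sum_mul_sum]
        rw [Finset.mul_sum]
        refine Finset.sum_congr rfl fun j _ => ?_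
        rw [Finset.mul_sum]
        refine Finset.sum_congr rfl fun k _ => ?_
        rw [hX2 s hs t ht j k]
        ring
      rw [hstep1]
      have hstep2 : (∑ i₁, ∑ i₂, ∑ j, ∑ k, pd2 φ (z s) i₁ i₂ * ζ1 s i₁ j * ζ1 s i₂ k
              * (x2 s t j k + x2 s t k j))
          = (∑ i₁, ∑ i₂, ∑ j, ∑ k,
              pd2 φ (z s) i₁ i₂ * ζ1 s i₁ j * ζ1 s i₂ k * x2 s t j k)
            + ∑ i₁, ∑ i₂, ∑ j, ∑ k,
              pd2 φ (z s) i₁ i₂ * ζ1 s i₁ j * ζ1 s i₂ k * x2 s t k j := by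
        simp_rw [mul_add, Finset.sum_add_distrib]
      rw [hstep2]
      have hswap : (∑ i₁, ∑ i₂, ∑ j, ∑ k,
              pd2 φ (z s) i₁ i₂ * ζ1 s i₁ j * ζ1 s i₂ k * x2 s t j k)
          = ∑ i₁, ∑ i₂, ∑ j, ∑ k,
              pd2 φ (z s) i₁ i₂ * ζ1 s i₁ j * ζ1 s i₂ k * x2 s t k j := by
        calc (∑ i₁, ∑ i₂, ∑ j, ∑ k,
                pd2 φ (z s) i₁ i₂ * ζ1 s i₁ j * ζ1 s i₂ k * x2 s t j k)
            = ∑ i₁, ∑ i₂, ∑ j, ∑ k,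
                pd2 φ (z s) i₂ i₁ * ζ1 s i₂ k * ζ1 s i₁ j * x2 s t k j := sum4_reindex _
          _ = ∑ i₁, ∑ i₂, ∑ j, ∑ k,
                pd2 φ (z s) i₁ i₂ * ζ1 s i₁ j * ζ1 s i₂ k * x2 s t k j := by
              refine Finset.sum_congr rfl fun i₁ _ => Finset.sum_congr rfl fun i₂ _ =>
                Finset.sum_congr rfl fun j _ => Finset.sum_congr rfl fun k _ => ?_
              rw [hsym2 (z s) i₂ i₁]
              ring
      rw [hswap]; ring
    have hmain : (φ (z t) - φ (z s))
          - (∑ j, (∑ i, pd φ (z s) i * ζ1 s i j) * (x t j - x s j))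
          - ∑ j, ∑ k, ((∑ i, pd φ (z s) i * ζ2 s i j k)
              + ∑ i₁, ∑ i₂, pd2 φ (z s) i₁ i₂ * ζ1 s i₁ j * ζ1 s i₂ k) * x2 s t k j
        = (φ (z t) - φ (z s) - (∑ i, pd φ (z s) i * (z t i - z s i))
            - (1/2:ℝ) * ∑ i₁, ∑ i₂, pd2 φ (z s) i₁ i₂ * (z t i₁ - z s i₁)
                * (z t i₂ - z s i₂))
          + (∑ i, pd φ (z s) i * r s t i)
          + (1/2:ℝ) * ∑ i₁, ∑ i₂, pd2 φ (z s) i₁ i₂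
              * ((z t i₁ - z s i₁ - ∑ j, ζ1 s i₁ j * (x t j - x s j)) * (z t i₂ - z s i₂)
                + (∑ j, ζ1 s i₁ j * (x t j - x s j))
                  * (z t i₂ - z s i₂ - ∑ j, ζ1 s i₂ j * (x t j - x s j))) := by
      rw [h1, h2, h3, hTT, hQ4sw]
      ring
    rw [hmain]
    have hBb : |φ (z t) - φ (z s) - (∑ i, pd φ (z s) i * (z t i - z s i))
          - (1/2:ℝ) * ∑ i₁, ∑ i₂, pd2 φ (z s) i₁ i₂ * (z t i₁ - z s i₁)
              * (z t i₂ - z s i₂)|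
        ≤ K * (N * |t - s| ^ κ) ^ 3 := by
      calc |φ (z t) - φ (z s) - (∑ i, pd φ (z s) i * (z t i - z s i))
            - (1/2:ℝ) * ∑ i₁, ∑ i₂, pd2 φ (z s) i₁ i₂ * (z t i₁ - z s i₁)
                * (z t i₂ - z s i₂)|
          ≤ K * ‖z t - z s‖ ^ 3 := htay3 (z s) (z t)
        _ ≤ K * (N * |t - s| ^ κ) ^ 3 :=
            mul_le_mul_of_nonneg_left
              (pow_le_pow_left₀ (norm_nonneg _) (hzn s hs t ht) 3) hK0
    have hRb : |∑ i, pd φ (z s) i * r s t i| ≤ l * (K * (N * |t - s| ^ (3*κ))) :=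
      sum_abs_le _ fun i => mul_bound (hpdK _ _) (hrb s hs t ht i)
    have hSb : |∑ i₁, ∑ i₂, pd2 φ (z s) i₁ i₂
          * ((z t i₁ - z s i₁ - ∑ j, ζ1 s i₁ j * (x t j - x s j)) * (z t i₂ - z s i₂)
            + (∑ j, ζ1 s i₁ j * (x t j - x s j))
              * (z t i₂ - z s i₂ - ∑ j, ζ1 s i₂ j * (x t j - x s j)))|
        ≤ l * ((l:ℝ) * (K * ((W * N * |t - s| ^ (2*κ)) * (N * |t - s| ^ κ)
            + ((d:ℝ) * (N * (CX * |t - s| ^ κ))) * (W * N * |t - s| ^ (2*κ))))) :=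
      sum_abs_le _ fun i₁ => sum_abs_le _ fun i₂ =>
        mul_bound (hpd2K _ _ _) (le_trans (abs_add_le _ _) (add_le_add
          (mul_bound (hQb i₁) (hzb s hs t ht i₂))
          (mul_bound (haa i₁) (hQb i₂))))
    have hC1b : |(1/2:ℝ) * ∑ i₁, ∑ i₂, pd2 φ (z s) i₁ i₂
          * ((z t i₁ - z s i₁ - ∑ j, ζ1 s i₁ j * (x t j - x s j)) * (z t i₂ - z s i₂)
            + (∑ j, ζ1 s i₁ j * (x t j - x s j))
              * (z t i₂ - z s i₂ - ∑ j, ζ1 s i₂ j * (x t j - x s j)))|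
        ≤ l * ((l:ℝ) * (K * ((W * N * |t - s| ^ (2*κ)) * (N * |t - s| ^ κ)
            + ((d:ℝ) * (N * (CX * |t - s| ^ κ))) * (W * N * |t - s| ^ (2*κ))))) := by
      rw [abs_mul, show |(1/2:ℝ)| = 1/2 by norm_num]
      have h0 := abs_nonneg (∑ i₁, ∑ i₂, pd2 φ (z s) i₁ i₂
          * ((z t i₁ - z s i₁ - ∑ j, ζ1 s i₁ j * (x t j - x s j)) * (z t i₂ - z s i₂)
            + (∑ j, ζ1 s i₁ j * (x t j - x s j))
              * (z t i₂ - z s i₂ - ∑ j, ζ1 s i₂ j * (x t j - x s j))))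
      have hR0 := le_trans h0 hSb
      have h5 := mul_le_mul_of_nonneg_left hSb (by norm_num : (0:ℝ) ≤ 1/2)
      linarith [h5, hR0]
    refine le_trans (abs_add3 _ _ _) (le_trans (add_le_add (add_le_add hBb hRb) hC1b) ?_)
    have heq : K * (N * |t - s| ^ κ) ^ 3 + (l:ℝ) * (K * (N * |t - s| ^ (3*κ)))
          + (l:ℝ) * ((l:ℝ) * (K * ((W * N * |t - s| ^ (2*κ)) * (N * |t - s| ^ κ)
            + ((d:ℝ) * (N * (CX * |t - s| ^ κ))) * (W * N * |t - s| ^ (2*κ)))))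
        = (K * (N * N * N) + (l:ℝ) * (K * N)
            + (l:ℝ) * (l:ℝ) * (K * (W * (N * N)))
            + (l:ℝ) * (l:ℝ) * (K * (W * ((d:ℝ) * CX) * (N * N)))) * |t - s| ^ (3*κ) := by
      rw [e3, e2]; ring
    rw [heq]
    refine mul_le_mul_of_nonneg_right ?_ hP3
    have g1 := mul_le_mul_of_nonneg_left (cube_ge3 hN0) hK0
    have g2 := mul_le_mul_of_nonneg_left (cube_ge1 hN0) hlK0
    have g3 := mul_le_mul_of_nonneg_left (cube_ge2 hN0) hllKW0
    have g4 := mul_le_mul_of_nonneg_left (cube_ge2 hN0) hllKWX0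
    rw [hc7def]; linarith [g1, g2, g4]
  -- ── assemble the weakly controlled path structure ──
  have hq1C : (0:ℝ) ≤ K * (1+N)^3 := mul_nonneg hK0 hM0
  have hq2C : (0:ℝ) ≤ c2 * (1+N)^3 := mul_nonneg hc20 hM0
  have hq3C : (0:ℝ) ≤ c3 * (1+N)^3 := mul_nonneg hc30 hM0
  have hq4C : (0:ℝ) ≤ c4 * (1+N)^3 := mul_nonneg hc40 hM0
  have hq5C : (0:ℝ) ≤ c5 * (1+N)^3 := mul_nonneg hc50 hM0
  have hq6C : (0:ℝ) ≤ c6 * (1+N)^3 := mul_nonneg hc60 hM0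
  have hq7C : (0:ℝ) ≤ c7 * (1+N)^3 := mul_nonneg hc70 hM0
  have hbz : HBound2 0 T κ (K * (1+N)^3) (fun s t => Zh φ z t - Zh φ z s) := by
    intro s hs t ht
    rw [pi_norm_le_iff_of_nonneg
      (mul_nonneg hq1C (Real.rpow_nonneg (abs_nonneg _) _))]
    intro e
    simp only [Zh, Pi.sub_apply, Real.norm_eq_abs]
    exact hb1 s hs t ht
  have hsupZ1h : ∀ t ∈ Icc (0:ℝ) T, ‖Z1h φ z ζ1 t‖ ≤ c2 * (1+N)^3 := by
    intro t ht
    rw [pi_norm_le_iff_of_nonneg hq2C]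
    intro e
    rw [pi_norm_le_iff_of_nonneg hq2C]
    intro j
    simp only [Z1h, Real.norm_eq_abs]
    exact hb2 t ht j
  have hbζ1h : HBound2 0 T κ (c3 * (1+N)^3) (fun s t => Z1h φ z ζ1 t - Z1h φ z ζ1 s) := by
    intro s hs t ht
    have hC : (0:ℝ) ≤ c3 * (1+N)^3 * |t - s| ^ κ :=
      mul_nonneg hq3C (Real.rpow_nonneg (abs_nonneg _) _)
    rw [pi_norm_le_iff_of_nonneg hC]
    intro e
    rw [pi_norm_le_iff_of_nonneg hC]
    intro j
    simp only [Z1h, Pi.sub_apply, Real.norm_eq_abs]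
    exact hb3 s hs t ht j
  have hsupZ2h : ∀ t ∈ Icc (0:ℝ) T, ‖Z2h φ z ζ1 ζ2 t‖ ≤ c4 * (1+N)^3 := by
    intro t ht
    rw [pi_norm_le_iff_of_nonneg hq4C]
    intro e
    rw [pi_norm_le_iff_of_nonneg hq4C]
    intro j
    rw [pi_norm_le_iff_of_nonneg hq4C]
    intro k
    simp only [Z2h, Real.norm_eq_abs]
    exact hb4 t ht j k
  have hbζ2h : HBound2 0 T κ (c5 * (1+N)^3)
      (fun s t => Z2h φ z ζ1 ζ2 t - Z2h φ z ζ1 ζ2 s) := by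
    intro s hs t ht
    have hC : (0:ℝ) ≤ c5 * (1+N)^3 * |t - s| ^ κ :=
      mul_nonneg hq5C (Real.rpow_nonneg (abs_nonneg _) _)
    rw [pi_norm_le_iff_of_nonneg hC]
    intro e
    rw [pi_norm_le_iff_of_nonneg hC]
    intro j
    rw [pi_norm_le_iff_of_nonneg hC]
    intro k
    simp only [Z2h, Pi.sub_apply, Real.norm_eq_abs]
    exact hb5 s hs t ht j k
  have hbρh : HBound2 0 T (2*κ) (c6 * (1+N)^3) (Ph φ x z ζ1 ζ2) := by
    intro s hs t ht
    have hC : (0:ℝ) ≤ c6 * (1+N)^3 * |t - s| ^ (2*κ) :=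
      mul_nonneg hq6C (Real.rpow_nonneg (abs_nonneg _) _)
    rw [pi_norm_le_iff_of_nonneg hC]
    intro e
    rw [pi_norm_le_iff_of_nonneg hC]
    intro j
    simp only [Ph, Z1h, Z2h, Real.norm_eq_abs]
    exact hb6 s hs t ht j
  have hbrh : HBound2 0 T (3*κ) (c7 * (1+N)^3) (Rh φ x x2 z ζ1 ζ2) := by
    intro s hs t ht
    have hC : (0:ℝ) ≤ c7 * (1+N)^3 * |t - s| ^ (3*κ) :=
      mul_nonneg hq7C (Real.rpow_nonneg (abs_nonneg _) _)
    rw [pi_norm_le_iff_of_nonneg hC]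
    intro e
    simp only [Rh, Z1h, Z2h, Real.norm_eq_abs]
    exact hb7 s hs t ht
  constructor
  · refine ⟨?_, ?_, ⟨K * (1+N)^3, hq1C, hbz⟩, ⟨c3 * (1+N)^3, hq3C, hbζ1h⟩,
      ⟨c5 * (1+N)^3, hq5C, hbζ2h⟩, ⟨c7 * (1+N)^3, hq7C, hbrh⟩,
      ⟨c6 * (1+N)^3, hq6C, hbρh⟩, ?_, ?_⟩
    · funext e
      simp only [Zh, hw.init]
    · funext e j
      simp only [Z1h, hw.init, hw.init1]
    · intro s hs t ht e
      simp only [Zh, Z1h, Z2h, Rh]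
      ring
    · intro s hs t ht e j
      simp only [Z1h, Z2h, Ph]
      ring
  · have q1 : HNorm2 0 T κ (fun s t => Zh φ z t - Zh φ z s) ≤ K * (1+N)^3 :=
      hnorm2_le hq1C hbz
    have q2 : SupNorm 0 T (Z1h φ z ζ1) ≤ c2 * (1+N)^3 := supnorm_le hq2C hsupZ1h
    have q3 : HNorm2 0 T κ (fun s t => Z1h φ z ζ1 t - Z1h φ z ζ1 s) ≤ c3 * (1+N)^3 :=
      hnorm2_le hq3C hbζ1h
    have q4 : SupNorm 0 T (Z2h φ z ζ1 ζ2) ≤ c4 * (1+N)^3 := supnorm_le hq4C hsupZ2h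
    have q5 : HNorm2 0 T κ (fun s t => Z2h φ z ζ1 ζ2 t - Z2h φ z ζ1 ζ2 s) ≤ c5 * (1+N)^3 :=
      hnorm2_le hq5C hbζ2h
    have q6 : HNorm2 0 T (2*κ) (Ph φ x z ζ1 ζ2) ≤ c6 * (1+N)^3 := hnorm2_le hq6C hbρh
    have q7 : HNorm2 0 T (3*κ) (Rh φ x x2 z ζ1 ζ2) ≤ c7 * (1+N)^3 := hnorm2_le hq7C hbrh
    have hQeq : QNorm T κ (Zh φ z) (Z1h φ z ζ1) (Z2h φ z ζ1 ζ2) (Rh φ x x2 z ζ1 ζ2)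
          (Ph φ x z ζ1 ζ2)
        = HNorm2 0 T κ (fun s t => Zh φ z t - Zh φ z s)
          + SupNorm 0 T (Z1h φ z ζ1)
          + HNorm2 0 T κ (fun s t => Z1h φ z ζ1 t - Z1h φ z ζ1 s)
          + SupNorm 0 T (Z2h φ z ζ1 ζ2)
          + HNorm2 0 T κ (fun s t => Z2h φ z ζ1 ζ2 t - Z2h φ z ζ1 ζ2 s)
          + HNorm2 0 T (2*κ) (Ph φ x z ζ1 ζ2)
          + HNorm2 0 T (3*κ) (Rh φ x x2 z ζ1 ζ2) := rfl
    have hsum0 : (0:ℝ) ≤ K + c2 + c3 + c4 + c5 + c6 + c7 := by linarith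
    have h8 := cube_le8 hN0
    calc QNorm T κ (Zh φ z) (Z1h φ z ζ1) (Z2h φ z ζ1 ζ2) (Rh φ x x2 z ζ1 ζ2)
          (Ph φ x z ζ1 ζ2)
        ≤ (K + c2 + c3 + c4 + c5 + c6 + c7) * (1+N)^3 := by
          rw [hQeq]; linarith
      _ ≤ (K + c2 + c3 + c4 + c5 + c6 + c7) * (8 * (1 + N^3)) :=
          mul_le_mul_of_nonneg_left h8 hsum0
      _ = 8 * (K + c2 + c3 + c4 + c5 + c6 + c7) * (1 + N^3) := by ring

end MainLemma

theorem statement4 (T γ κ : ℝ) (hT : 0 < T) (d l : ℕ)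
    (x : ℝ → Fin d → ℝ) (x2 : ℝ → ℝ → Fin d → Fin d → ℝ)
    (x3 : ℝ → ℝ → Fin d → Fin d → Fin d → ℝ)
    (hX1 : HypX1 T γ d x x2 x3) (hX2 : HypX2 T x x2)
    (hκ0 : 0 < κ) (hκγ : κ ≤ γ) (hsum : 1 < 3 * κ + γ)
    (φ : (Fin l → ℝ) → ℝ) (hφ : CbN 3 φ) :
    ∃ c : ℝ, 0 ≤ c ∧
      ∀ (a : Fin l → ℝ) (b : Fin l → Fin d → ℝ)
        (z : ℝ → Fin l → ℝ) (ζ1 : ℝ → Fin l → Fin d → ℝ)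
        (ζ2 : ℝ → Fin l → Fin d → Fin d → ℝ)
        (r : ℝ → ℝ → Fin l → ℝ) (ρ : ℝ → ℝ → Fin l → Fin d → ℝ),
        WCP T κ x x2 a b z ζ1 ζ2 r ρ →
        -- the data of the composed path `ẑ = φ(z)`
        (let zh : ℝ → Fin 1 → ℝ := fun t _ => φ (z t)
        let ζ1h : ℝ → Fin 1 → Fin d → ℝ := fun t _ j => ∑ i, pd φ (z t) i * ζ1 t i j
        let ζ2h : ℝ → Fin 1 → Fin d → Fin d → ℝ := fun t _ j k =>
          (∑ i, pd φ (z t) i * ζ2 t i j k)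
            + ∑ i₁, ∑ i₂, pd2 φ (z t) i₁ i₂ * ζ1 t i₁ j * ζ1 t i₂ k
        let rh : ℝ → ℝ → Fin 1 → ℝ := fun s t e => (φ (z t) - φ (z s))
          - (∑ j, ζ1h s e j * (x t j - x s j)) - ∑ j, ∑ k, ζ2h s e j k * x2 s t k j
        let ρh : ℝ → ℝ → Fin 1 → Fin d → ℝ := fun s t e j =>
          (ζ1h t e j - ζ1h s e j) - ∑ k, ζ2h s e j k * (x t k - x s k)
        -- `ẑ ∈ Q_{κ,â,b̂}(ℝ)` with `â = φ(a)`, `b̂^j = ∂ᵢφ(a) b^{ij}`, remainders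
        -- `r̂ ∈ C₂^{3κ}`, `ρ̂ ∈ C₂^{2κ}`, and the cubic norm bound holds.
        WCP T κ x x2 (fun _ : Fin 1 => φ a) (fun _ : Fin 1 => fun j => ∑ i, pd φ a i * b i j)
            zh ζ1h ζ2h rh ρh ∧
          QNorm T κ zh ζ1h ζ2h rh ρh ≤ c * (1 + QNorm T κ z ζ1 ζ2 r ρ ^ 3)) := by
  exact main_estimate T γ κ hT d l x x2 x3 hX1 hX2 hκ0 hκγ hsum φ hφ
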